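/- In the recurrent regime, for x₀ ≥ 1 the first hitting time τ_{x₀,0} of 0 satisfies E(u^{τ_{x₀,0}}) = z(u)^{x₀}·E(u^{τ_{0,0}}); hence τ_{x₀,0} is distributed as the independent sum τ_{0,0} + Σ_{k=1}^{x₀} τ_k, where (τ_k) are i.i.d. with p.g.f. z(u). In the positive recurrent case, E(τ_{x₀,0}) = (b₀x₀ + μ_δ)/(b₀(μ_δ - μ_β)). -/

import Mathlib

open MeasureTheory ProbabilityTheory Set
open scoped ENNReal

namespace Stmt15

/-- deterministic walk driven by a sequence of (death, birth) pairs -/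
def pw (x : ℕ) : ℕ → (ℕ → ℕ × ℕ) → ℕ
  | 0, _ => x
  | k+1, v => (pw x k v - (v k).1) + (v k).2

lemma pw_congr (x : ℕ) : ∀ (k : ℕ) (v w : ℕ → ℕ × ℕ), (∀ j < k, v j = w j) →
    pw x k v = pw x k w
  | 0, _, _, _ => rfl
  | (k+1), v, w, h => by
      simp only [pw, pw_congr x k v w (fun j hj => h j (Nat.lt_succ_of_lt hj)),
        h k (Nat.lt_succ_self k)]

lemma pw_shift (x : ℕ) : ∀ (k : ℕ) (v : ℕ → ℕ × ℕ),
    pw x (k+1) v = pw ((x - (v 0).1) + (v 0).2) k (fun j => v (j+1))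
  | 0, v => rfl
  | (k+1), v => by
      show (pw x (k+1) v - (v (k+1)).1) + (v (k+1)).2 = _
      rw [pw_shift x k v]; rfl

/-- extend a finite tuple to an infinite one -/
def ext (n : ℕ) (v : Fin n → ℕ × ℕ) : ℕ → ℕ × ℕ := fun j => if h : j < n then v ⟨j, h⟩ else (0,0)

/-- tuples whose walk from `x` first hits 0 at time exactly `n` -/
def hitSet (x n : ℕ) : Set (Fin n → ℕ × ℕ) :=
  {v | pw x n (ext n v) = 0 ∧ ∀ k < n, pw x k (ext n v) ≠ 0}

/-- combinatorial first-passage mass -/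
noncomputable def q (α : ℝ) (b : ℕ → ℝ) : ℕ → ℕ → ℝ≥0∞
  | x, 0 => if x = 0 then 1 else 0
  | x, n+1 => if x = 0 then 0 else
      ∑' de : ℕ × ℕ, (ENNReal.ofReal (α * (1-α) ^ de.1) * ENNReal.ofReal (b de.2)) *
        q α b ((x - de.1) + de.2) n

noncomputable def wprod (α : ℝ) (b : ℕ → ℝ) {n : ℕ} (v : Fin n → ℕ × ℕ) : ℝ≥0∞ :=
  ∏ i, ENNReal.ofReal (α * (1-α) ^ (v i).1) * ENNReal.ofReal (b (v i).2)

lemma pw_cons (x : ℕ) {n : ℕ} (a : ℕ × ℕ) (t : Fin n → ℕ × ℕ) {k : ℕ} (hk : k ≤ n) :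
    pw x (k+1) (ext (n+1) (Fin.cons a t)) = pw ((x - a.1) + a.2) k (ext n t) := by
  rw [pw_shift]
  have h0 : ext (n+1) (Fin.cons a t) 0 = a := by
    simp [ext, Nat.succ_pos]
  rw [h0]
  exact pw_congr _ k _ _ (fun j hj => by
    have hjn : j < n := lt_of_lt_of_le hj hk
    simp only [ext, hjn, Nat.add_lt_add_right hjn 1, dif_pos]
    exact congrArg (Fin.cons a t) rfl |>.trans (by
      have : (⟨j+1, Nat.add_lt_add_right hjn 1⟩ : Fin (n+1)) = Fin.succ ⟨j, hjn⟩ := rfl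
      rw [this, Fin.cons_succ]))

lemma cons_mem_hitSet {x n : ℕ} (hx : x ≠ 0) (a : ℕ × ℕ) (t : Fin n → ℕ × ℕ) :
    Fin.cons a t ∈ hitSet x (n+1) ↔ t ∈ hitSet ((x - a.1) + a.2) n := by
  constructor
  · rintro ⟨h1, h2⟩
    refine ⟨by rw [← pw_cons x a t (le_refl n)]; exact h1, fun k hk => ?_⟩
    rw [← pw_cons x a t (le_of_lt hk)]
    exact h2 (k+1) (Nat.add_lt_add_right hk 1)
  · rintro ⟨h1, h2⟩
    refine ⟨by rw [pw_cons x a t (le_refl n)]; exact h1, fun k hk => ?_⟩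
    cases k with
    | zero => exact hx
    | succ j =>
        rw [pw_cons x a t (k := j) (by omega)]
        exact h2 j (by omega)

lemma hitSet_zero_succ (n : ℕ) : hitSet 0 (n+1) = ∅ := by
  ext v
  simp only [hitSet, mem_setOf_eq, mem_empty_iff_false, iff_false, not_and]
  intro _
  push_neg
  exact ⟨0, Nat.succ_pos n, rfl⟩

lemma tsum_hitSet (α : ℝ) (b : ℕ → ℝ) :
    ∀ (n x : ℕ), (∑' v : Fin n → ℕ × ℕ, (hitSet x n).indicator (wprod α b) v) = q α b x n := by
  intro n
  induction n with
  | zero =>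
      intro x
      rw [tsum_eq_single (default : Fin 0 → ℕ × ℕ)
        (fun b' hb' => absurd (Subsingleton.elim b' default) hb')]
      by_cases hx : x = 0
      · subst hx
        have : (default : Fin 0 → ℕ × ℕ) ∈ hitSet 0 0 := ⟨rfl, by omega⟩
        rw [indicator_of_mem this]
        simp [q, wprod]
      · have : (default : Fin 0 → ℕ × ℕ) ∉ hitSet x 0 := by
          intro h; exact hx h.1
        rw [indicator_of_notMem this]
        simp [q, hx]
  | succ n ih =>
      intro x
      by_cases hx : x = 0
      · subst hx
        simp [q, hitSet_zero_succ n]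
      · rw [← (Fin.consEquiv (fun _ => ℕ × ℕ)).tsum_eq]
        have hpt : ∀ (p : (ℕ × ℕ) × (Fin n → ℕ × ℕ)),
            (hitSet x (n+1)).indicator (wprod α b) ((Fin.consEquiv _) p) =
            (ENNReal.ofReal (α * (1-α) ^ p.1.1) * ENNReal.ofReal (b p.1.2)) *
              (hitSet ((x - p.1.1) + p.1.2) n).indicator (wprod α b) p.2 := by
          rintro ⟨a, t⟩
          have hc : (Fin.consEquiv (fun _ => ℕ × ℕ)) (a, t) = Fin.cons a t := rfl
          rw [hc]
          have hw : wprod α b (Fin.cons a t) =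
              (ENNReal.ofReal (α * (1-α) ^ a.1) * ENNReal.ofReal (b a.2)) * wprod α b t := by
            unfold wprod
            rw [Fin.prod_univ_succ]
            simp [Fin.cons_succ]
          by_cases ht : t ∈ hitSet ((x - a.1) + a.2) n
          · rw [indicator_of_mem ((cons_mem_hitSet hx a t).mpr ht),
              indicator_of_mem ht, hw]
          · rw [indicator_of_notMem (fun hmem => ht ((cons_mem_hitSet hx a t).mp hmem)),
              indicator_of_notMem ht, mul_zero]
        calc (∑' p : (ℕ × ℕ) × (Fin n → ℕ × ℕ),
                (hitSet x (n+1)).indicator (wprod α b) ((Fin.consEquiv _) p))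
            = ∑' p : (ℕ × ℕ) × (Fin n → ℕ × ℕ),
                (ENNReal.ofReal (α * (1-α) ^ p.1.1) * ENNReal.ofReal (b p.1.2)) *
                  (hitSet ((x - p.1.1) + p.1.2) n).indicator (wprod α b) p.2 := tsum_congr hpt
          _ = ∑' (a : ℕ × ℕ) (t : Fin n → ℕ × ℕ),
                (ENNReal.ofReal (α * (1-α) ^ a.1) * ENNReal.ofReal (b a.2)) *
                  (hitSet ((x - a.1) + a.2) n).indicator (wprod α b) t := ENNReal.tsum_prod'
          _ = ∑' a : ℕ × ℕ, (ENNReal.ofReal (α * (1-α) ^ a.1) * ENNReal.ofReal (b a.2)) *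
                q α b ((x - a.1) + a.2) n := by
              refine tsum_congr (fun a => ?_)
              rw [ENNReal.tsum_mul_left, ih ((x - a.1) + a.2)]
          _ = q α b x (n+1) := by rw [q, if_neg hx]

end Stmt15

namespace Stmt15

section MeasureLayer

variable {Ω : Type*} [MeasurableSpace Ω] (μ : Measure Ω)
  (α : ℝ) (b : ℕ → ℝ) (δ β : ℕ → Ω → ℕ)

/-- the driving tuple of the first `n` steps -/
def Phi (n : ℕ) (ω : Ω) : Fin n → ℕ × ℕ := fun i => (δ (i+1) ω, β (i+1) ω)

lemma measurable_Phi (hmδ : ∀ n, Measurable (δ n)) (hmβ : ∀ n, Measurable (β n)) (n : ℕ) :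
    Measurable (Phi δ β n) := by
  rw [measurable_pi_iff]
  exact fun i => (hmδ _).prodMk (hmβ _)

lemma meas_cyl (hδd : ∀ n x, μ {ω | δ n ω = x} = ENNReal.ofReal (α * (1 - α) ^ x))
    (hβd : ∀ n x, μ {ω | β n ω = x} = ENNReal.ofReal (b x))
    (hindep : iIndepFun (Sum.elim δ β) μ)
    (n : ℕ) (v : Fin n → ℕ × ℕ) :
    μ (Phi δ β n ⁻¹' {v}) = wprod α b v := by
  classical
  set v' : ℕ → ℕ × ℕ := ext n v with hv'
  have hv'eq : ∀ i : Fin n, v' (i : ℕ) = v i := by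
    intro i
    simp [hv', ext, i.isLt]
  set S : Finset (ℕ ⊕ ℕ) := ((Finset.range n).image fun i => Sum.inl (i+1)) ∪
    ((Finset.range n).image fun i => Sum.inr (i+1)) with hS
  set sets : ℕ ⊕ ℕ → Set ℕ := Sum.elim
    (fun a => {y | a - 1 < n → y = (v' (a-1)).1})
    (fun a => {y | a - 1 < n → y = (v' (a-1)).2}) with hsets
  have hmeas : ∀ j, j ∈ S → MeasurableSet (sets j) := fun j _ => trivial
  have hE : Phi δ β n ⁻¹' {v} = ⋂ j ∈ S, (Sum.elim δ β j) ⁻¹' sets j := by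
    ext ω
    simp only [mem_preimage, mem_singleton_iff, Set.mem_iInter]
    constructor
    · intro h j hj
      simp only [hS, Finset.mem_union, Finset.mem_image, Finset.mem_range] at hj
      rcases hj with ⟨i, hi, rfl⟩ | ⟨i, hi, rfl⟩
      · simp only [hsets, Sum.elim_inl, mem_preimage, mem_setOf_eq, Nat.add_sub_cancel]
        intro hi'
        have : v' i = v ⟨i, hi'⟩ := by simp [hv', ext, hi']
        rw [this, ← h]
        rfl
      · simp only [hsets, Sum.elim_inr, mem_preimage, mem_setOf_eq, Nat.add_sub_cancel]
        intro hi'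
        have : v' i = v ⟨i, hi'⟩ := by simp [hv', ext, hi']
        rw [this, ← h]
        rfl
    · intro h
      funext i
      have h1 := h (Sum.inl ((i : ℕ)+1)) (by
        simp only [hS, Finset.mem_union, Finset.mem_image, Finset.mem_range]
        exact Or.inl ⟨i, i.isLt, rfl⟩)
      have h2 := h (Sum.inr ((i : ℕ)+1)) (by
        simp only [hS, Finset.mem_union, Finset.mem_image, Finset.mem_range]
        exact Or.inr ⟨i, i.isLt, rfl⟩)
      simp only [hsets, Sum.elim_inl, Sum.elim_inr, mem_preimage, mem_setOf_eq,
        Nat.add_sub_cancel] at h1 h2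
      have e1 := h1 i.isLt
      have e2 := h2 i.isLt
      rw [hv'eq i] at e1 e2
      show (δ ((i:ℕ)+1) ω, β ((i:ℕ)+1) ω) = v i
      rw [e1, e2]
  rw [hE, hindep.measure_inter_preimage_eq_mul S hmeas]
  have hdisj : Disjoint ((Finset.range n).image fun i => (Sum.inl (i+1) : ℕ ⊕ ℕ))
      ((Finset.range n).image fun i => (Sum.inr (i+1) : ℕ ⊕ ℕ)) := by
    simp only [Finset.disjoint_left, Finset.mem_image, Finset.mem_range]
    rintro a ⟨i, hi, rfl⟩ ⟨i', hi', h⟩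
    exact absurd h (by simp)
  have hinjl : Set.InjOn (fun i => (Sum.inl (i+1) : ℕ ⊕ ℕ)) (Finset.range n) := by
    intro a _ c _ h; simpa using h
  have hinjr : Set.InjOn (fun i => (Sum.inr (i+1) : ℕ ⊕ ℕ)) (Finset.range n) := by
    intro a _ c _ h; simpa using h
  rw [hS, Finset.prod_union hdisj, Finset.prod_image hinjl, Finset.prod_image hinjr]
  have hterm1 : ∀ i ∈ Finset.range n,
      μ ((Sum.elim δ β (Sum.inl (i+1))) ⁻¹' sets (Sum.inl (i+1))) =
        ENNReal.ofReal (α * (1-α) ^ (v' i).1) := by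
    intro i hi
    rw [Finset.mem_range] at hi
    have : (Sum.elim δ β (Sum.inl (i+1))) ⁻¹' sets (Sum.inl (i+1)) =
        {ω | δ (i+1) ω = (v' i).1} := by
      ext ω
      simp only [hsets, Sum.elim_inl, mem_preimage, mem_setOf_eq, Nat.add_sub_cancel]
      exact ⟨fun h => h hi, fun h _ => h⟩
    rw [this, hδd]
  have hterm2 : ∀ i ∈ Finset.range n,
      μ ((Sum.elim δ β (Sum.inr (i+1))) ⁻¹' sets (Sum.inr (i+1))) =
        ENNReal.ofReal (b (v' i).2) := by
    intro i hi
    rw [Finset.mem_range] at hi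
    have : (Sum.elim δ β (Sum.inr (i+1))) ⁻¹' sets (Sum.inr (i+1)) =
        {ω | β (i+1) ω = (v' i).2} := by
      ext ω
      simp only [hsets, Sum.elim_inr, mem_preimage, mem_setOf_eq, Nat.add_sub_cancel]
      exact ⟨fun h => h hi, fun h _ => h⟩
    rw [this, hβd]
  rw [Finset.prod_congr rfl hterm1, Finset.prod_congr rfl hterm2, ← Finset.prod_mul_distrib]
  unfold wprod
  rw [← Fin.prod_univ_eq_prod_range
    (fun i => ENNReal.ofReal (α * (1-α) ^ (v' i).1) * ENNReal.ofReal (b (v' i).2)) n]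
  exact Finset.prod_congr rfl (fun i _ => by rw [hv'eq i])

lemma meas_hitE [IsProbabilityMeasure μ]
    (hmδ : ∀ n, Measurable (δ n)) (hmβ : ∀ n, Measurable (β n))
    (hδd : ∀ n x, μ {ω | δ n ω = x} = ENNReal.ofReal (α * (1 - α) ^ x))
    (hβd : ∀ n x, μ {ω | β n ω = x} = ENNReal.ofReal (b x))
    (hindep : iIndepFun (Sum.elim δ β) μ)
    (x n : ℕ) :
    μ (Phi δ β n ⁻¹' hitSet x n) = q α b x n := by
  have hU : Phi δ β n ⁻¹' hitSet x n =
      ⋃ (v : ↥(hitSet x n)), Phi δ β n ⁻¹' {(v : Fin n → ℕ × ℕ)} := by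
    ext ω
    simp only [mem_preimage, Set.mem_iUnion, mem_singleton_iff]
    exact ⟨fun h => ⟨⟨_, h⟩, rfl⟩, by rintro ⟨⟨w, hw⟩, h⟩; rw [h]; exact hw⟩
  rw [hU, measure_iUnion
    (by
      intro v w hvw
      refine Disjoint.preimage _ ?_
      simp only [Set.disjoint_singleton]
      exact fun h => hvw (Subtype.ext h))
    (fun v => measurable_Phi δ β hmδ hmβ n (MeasurableSet.singleton _))]
  calc (∑' v : ↥(hitSet x n), μ (Phi δ β n ⁻¹' {(v : Fin n → ℕ × ℕ)}))
      = ∑' v : ↥(hitSet x n), wprod α b (v : Fin n → ℕ × ℕ) :=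
        tsum_congr (fun v => meas_cyl μ α b δ β hδd hβd hindep n v)
    _ = ∑' v : Fin n → ℕ × ℕ, (hitSet x n).indicator (wprod α b) v := tsum_subtype _ _
    _ = q α b x n := tsum_hitSet α b n x

end MeasureLayer

end Stmt15

namespace Stmt15

section Analytic

variable {α : ℝ} {b : ℕ → ℝ}

/-- ENNReal generating function of first-passage masses -/
noncomputable def FE (α : ℝ) (b : ℕ → ℝ) (u : ℝ) (x : ℕ) : ℝ≥0∞ :=
  ∑' n, (ENNReal.ofReal u)^n * q α b x n

/-- real generating function -/
noncomputable def F (α : ℝ) (b : ℕ → ℝ) (u : ℝ) (x : ℕ) : ℝ := (FE α b u x).toReal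

/-- real first-passage coefficients -/
noncomputable def cc (α : ℝ) (b : ℕ → ℝ) (x n : ℕ) : ℝ := (q α b x n).toReal

lemma hasSum_geo (hα0 : 0 < α) (hα1 : α < 1) : HasSum (fun d => α * (1-α)^d) 1 := by
  have h := (hasSum_geometric_of_lt_one (by linarith : (0:ℝ) ≤ 1 - α)
    (by linarith : 1 - α < 1)).mul_left α
  have : 1 - (1 - α) = α := by ring
  rw [this] at h
  rw [mul_inv_cancel₀ hα0.ne'] at h
  exact h

lemma summable_geo (hα0 : 0 < α) (hα1 : α < 1) : Summable (fun d => α * (1-α)^d) :=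
  (hasSum_geo hα0 hα1).summable

lemma geo_nonneg (hα0 : 0 < α) (hα1 : α < 1) : ∀ d, 0 ≤ α * (1-α)^d :=
  fun d => mul_nonneg hα0.le (pow_nonneg (by linarith) d)

lemma wsum_e (hα0 : 0 < α) (hα1 : α < 1) : ∑' d, ENNReal.ofReal (α*(1-α)^d) = 1 := by
  rw [← ENNReal.ofReal_tsum_of_nonneg (geo_nonneg hα0 hα1) (summable_geo hα0 hα1),
    (hasSum_geo hα0 hα1).tsum_eq, ENNReal.ofReal_one]

lemma bsum_e (hbnn : ∀ n, 0 ≤ b n) (hbsum : HasSum b 1) :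
    ∑' e, ENNReal.ofReal (b e) = 1 := by
  rw [← ENNReal.ofReal_tsum_of_nonneg hbnn hbsum.summable, hbsum.tsum_eq, ENNReal.ofReal_one]

lemma wsum_prod_e (hα0 : 0 < α) (hα1 : α < 1) (hbnn : ∀ n, 0 ≤ b n) (hbsum : HasSum b 1) :
    ∑' de : ℕ×ℕ, ENNReal.ofReal (α*(1-α)^de.1) * ENNReal.ofReal (b de.2) = 1 := by
  rw [ENNReal.tsum_prod']
  calc (∑' (d : ℕ) (e : ℕ), ENNReal.ofReal (α*(1-α)^d) * ENNReal.ofReal (b e))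
      = ∑' (d : ℕ), ENNReal.ofReal (α*(1-α)^d) * ∑' (e : ℕ), ENNReal.ofReal (b e) := by
        exact tsum_congr fun d => ENNReal.tsum_mul_left
    _ = 1 := by rw [bsum_e hbnn hbsum]; simp only [mul_one]; exact wsum_e hα0 hα1

lemma summable_w (hα0 : 0 < α) (hα1 : α < 1) (hbnn : ∀ n, 0 ≤ b n) (hbsum : HasSum b 1) :
    Summable (fun de : ℕ×ℕ => α*(1-α)^de.1 * b de.2) :=
  Summable.mul_of_nonneg (summable_geo hα0 hα1) hbsum.summable
    (geo_nonneg hα0 hα1) hbnn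

lemma hasSum_w (hα0 : 0 < α) (hα1 : α < 1) (hbnn : ∀ n, 0 ≤ b n) (hbsum : HasSum b 1) :
    HasSum (fun de : ℕ×ℕ => α*(1-α)^de.1 * b de.2) 1 := by
  have := HasSum.mul (hasSum_geo hα0 hα1) hbsum (summable_w hα0 hα1 hbnn hbsum)
  rwa [one_mul] at this

lemma q_le_one (hq1 : ∀ x, (∑' n, q α b x n) ≤ 1) (x n : ℕ) : q α b x n ≤ 1 :=
  le_trans (ENNReal.le_tsum n) (hq1 x)

lemma q_ne_top (hq1 : ∀ x, (∑' n, q α b x n) ≤ 1) (x n : ℕ) : q α b x n ≠ ⊤ :=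
  ne_top_of_le_ne_top ENNReal.one_ne_top (q_le_one hq1 x n)

lemma q_eq_ofReal (hq1 : ∀ x, (∑' n, q α b x n) ≤ 1) (x n : ℕ) :
    q α b x n = ENNReal.ofReal (cc α b x n) := by
  rw [cc, ENNReal.ofReal_toReal (q_ne_top hq1 x n)]

lemma cc_nonneg (x n : ℕ) : 0 ≤ cc α b x n := ENNReal.toReal_nonneg

lemma cc_le_one (hq1 : ∀ x, (∑' n, q α b x n) ≤ 1) (x n : ℕ) : cc α b x n ≤ 1 := by
  have := ENNReal.toReal_mono ENNReal.one_ne_top (q_le_one hq1 x n)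
  simpa [cc] using this

lemma summable_cc (hq1 : ∀ x, (∑' n, q α b x n) ≤ 1) (x : ℕ) : Summable (cc α b x) :=
  ENNReal.summable_toReal (ne_top_of_le_ne_top ENNReal.one_ne_top (hq1 x))

lemma tsum_cc_le_one (hq1 : ∀ x, (∑' n, q α b x n) ≤ 1) (x : ℕ) :
    ∑' n, cc α b x n ≤ 1 := by
  have h : ∑' n, cc α b x n = (∑' n, q α b x n).toReal :=
    (ENNReal.tsum_toReal_eq (fun n => q_ne_top hq1 x n)).symm
  rw [h]
  have := ENNReal.toReal_mono ENNReal.one_ne_top (hq1 x)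
  simpa using this

lemma FE_le_one (hu0 : 0 ≤ u) (hu1 : u ≤ 1) (hq1 : ∀ x, (∑' n, q α b x n) ≤ 1) (x : ℕ) :
    FE α b u x ≤ 1 := by
  refine le_trans (le_trans (Summable.tsum_le_tsum (fun n => ?_) ENNReal.summable ENNReal.summable)
    le_rfl) (hq1 x)
  calc (ENNReal.ofReal u)^n * q α b x n ≤ 1^n * q α b x n := by
        gcongr
        exact ENNReal.ofReal_le_one.mpr hu1
    _ = q α b x n := by rw [one_pow, one_mul]

lemma FE_ne_top (hu0 : 0 ≤ u) (hu1 : u ≤ 1) (hq1 : ∀ x, (∑' n, q α b x n) ≤ 1) (x : ℕ) :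
    FE α b u x ≠ ⊤ :=
  ne_top_of_le_ne_top ENNReal.one_ne_top (FE_le_one hu0 hu1 hq1 x)

lemma FE_zero_start (u : ℝ) : FE α b u 0 = 1 := by
  rw [FE, tsum_eq_single 0 (fun n hn => by
    cases n with
    | zero => exact absurd rfl hn
    | succ m => simp [q])]
  simp [q]

lemma q_succ_ne (hx : x ≠ 0) (n : ℕ) : q α b x (n+1) =
    ∑' de : ℕ × ℕ, (ENNReal.ofReal (α * (1-α) ^ de.1) * ENNReal.ofReal (b de.2)) *
      q α b ((x - de.1) + de.2) n := by
  rw [q, if_neg hx]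

lemma FE_eq (hx : x ≠ 0) (u : ℝ) :
    FE α b u x = ENNReal.ofReal u * ∑' de : ℕ×ℕ,
      (ENNReal.ofReal (α*(1-α)^de.1) * ENNReal.ofReal (b de.2)) *
        FE α b u ((x - de.1) + de.2) := by
  rw [FE, tsum_eq_zero_add' ENNReal.summable]
  have h0 : (ENNReal.ofReal u)^0 * q α b x 0 = 0 := by
    simp [q, hx]
  rw [h0, zero_add]
  calc (∑' n, (ENNReal.ofReal u)^(n+1) * q α b x (n+1))
      = ∑' n, ∑' de : ℕ×ℕ, (ENNReal.ofReal u)^(n+1) *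
          ((ENNReal.ofReal (α*(1-α)^de.1) * ENNReal.ofReal (b de.2)) *
            q α b ((x - de.1) + de.2) n) := by
        refine tsum_congr fun n => ?_
        rw [q_succ_ne hx, ENNReal.tsum_mul_left]
    _ = ∑' de : ℕ×ℕ, ∑' n, (ENNReal.ofReal u)^(n+1) *
          ((ENNReal.ofReal (α*(1-α)^de.1) * ENNReal.ofReal (b de.2)) *
            q α b ((x - de.1) + de.2) n) := ENNReal.tsum_comm
    _ = ENNReal.ofReal u * ∑' de : ℕ×ℕ,
          (ENNReal.ofReal (α*(1-α)^de.1) * ENNReal.ofReal (b de.2)) *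
            FE α b u ((x - de.1) + de.2) := by
        rw [← ENNReal.tsum_mul_left]
        refine tsum_congr fun de => ?_
        rw [FE, ← ENNReal.tsum_mul_left, ← ENNReal.tsum_mul_left]
        refine tsum_congr fun n => ?_
        ring

lemma F_tsum (hu0 : 0 ≤ u) (hq1 : ∀ x, (∑' n, q α b x n) ≤ 1) (x : ℕ) :
    F α b u x = ∑' n, u^n * cc α b x n := by
  rw [F, FE, ENNReal.tsum_toReal_eq (fun n => ENNReal.mul_ne_top
    (ENNReal.pow_ne_top ENNReal.ofReal_ne_top) (q_ne_top hq1 x n))]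
  refine tsum_congr fun n => ?_
  rw [ENNReal.toReal_mul, ENNReal.toReal_pow, ENNReal.toReal_ofReal hu0, cc]

lemma F_nonneg (u : ℝ) (x : ℕ) : 0 ≤ F α b u x := ENNReal.toReal_nonneg

lemma F_le_one (hu0 : 0 ≤ u) (hu1 : u ≤ 1) (hq1 : ∀ x, (∑' n, q α b x n) ≤ 1) (x : ℕ) :
    F α b u x ≤ 1 := by
  have := ENNReal.toReal_mono ENNReal.one_ne_top (FE_le_one hu0 hu1 hq1 x)
  simpa [F] using this

lemma F_zero_start (u : ℝ) : F α b u 0 = 1 := by rw [F, FE_zero_start]; simp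

lemma summable_wFE_toReal (hα0 : 0 < α) (hα1 : α < 1) (hbnn : ∀ n, 0 ≤ b n)
    (hbsum : HasSum b 1) (hu0 : 0 ≤ u) (hu1 : u ≤ 1)
    (hq1 : ∀ x, (∑' n, q α b x n) ≤ 1) (x : ℕ) :
    (∑' de : ℕ×ℕ, (ENNReal.ofReal (α*(1-α)^de.1) * ENNReal.ofReal (b de.2)) *
      FE α b u ((x - de.1) + de.2)) ≤ 1 := by
  refine le_trans (Summable.tsum_le_tsum (fun de => ?_) ENNReal.summable ENNReal.summable)
    (le_of_eq (wsum_prod_e hα0 hα1 hbnn hbsum))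
  calc (ENNReal.ofReal (α*(1-α)^de.1) * ENNReal.ofReal (b de.2)) * FE α b u ((x - de.1) + de.2)
      ≤ (ENNReal.ofReal (α*(1-α)^de.1) * ENNReal.ofReal (b de.2)) * 1 := by
        gcongr
        exact FE_le_one hu0 hu1 hq1 _
    _ = _ := mul_one _

lemma F_eq (hα0 : 0 < α) (hα1 : α < 1) (hbnn : ∀ n, 0 ≤ b n) (hbsum : HasSum b 1)
    (hu0 : 0 ≤ u) (hu1 : u ≤ 1) (hq1 : ∀ x, (∑' n, q α b x n) ≤ 1) (hx : x ≠ 0) :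
    F α b u x = u * ∑' de : ℕ×ℕ, (α*(1-α)^de.1 * b de.2) * F α b u ((x - de.1) + de.2) := by
  rw [F, FE_eq hx, ENNReal.toReal_mul, ENNReal.toReal_ofReal hu0]
  congr 1
  rw [ENNReal.tsum_toReal_eq (fun de => ENNReal.mul_ne_top
    (ENNReal.mul_ne_top ENNReal.ofReal_ne_top ENNReal.ofReal_ne_top)
    (FE_ne_top hu0 hu1 hq1 _))]
  refine tsum_congr fun de => ?_
  rw [ENNReal.toReal_mul, ENNReal.toReal_mul, ENNReal.toReal_ofReal (geo_nonneg hα0 hα1 _),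
    ENNReal.toReal_ofReal (hbnn _)]
  rfl

lemma summable_wF (hα0 : 0 < α) (hα1 : α < 1) (hbnn : ∀ n, 0 ≤ b n) (hbsum : HasSum b 1)
    {g : ℕ → ℝ} (hg : ∀ y, |g y| ≤ C) :
    Summable (fun de : ℕ×ℕ => (α*(1-α)^de.1 * b de.2) * g ((x - de.1) + de.2)) := by
  apply Summable.of_norm
  refine Summable.of_nonneg_of_le (fun de => norm_nonneg _) (fun de => ?_)
    ((summable_w hα0 hα1 hbnn hbsum).mul_right C)
  rw [norm_mul]
  have h1 : 0 ≤ α*(1-α)^de.1 * b de.2 := mul_nonneg (geo_nonneg hα0 hα1 _) (hbnn _)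
  rw [Real.norm_of_nonneg h1]
  have h2 : ‖g ((x - de.1) + de.2)‖ ≤ C := by
    rw [Real.norm_eq_abs]; exact hg _
  calc α*(1-α)^de.1 * b de.2 * ‖g ((x - de.1) + de.2)‖
      ≤ α*(1-α)^de.1 * b de.2 * C := by
        apply mul_le_mul_of_nonneg_left h2 h1
    _ = _ := rfl

end Analytic

end Stmt15

namespace Stmt15

section ZFacts

variable {α : ℝ} {b : ℕ → ℝ} {φβ : ℝ → ℝ} {u z : ℝ}

noncomputable def Dv (α : ℝ) (b : ℕ → ℝ) (u z : ℝ) : ℝ :=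
  α * b 0 * u * z / (α * b 0 * u * z + (1-α) * (1-z))

noncomputable def Hv (α : ℝ) (b : ℕ → ℝ) (u z : ℝ) (x : ℕ) : ℝ :=
  if x = 0 then 1 else z^x * Dv α b u z

lemma summable_bz (hbnn : ∀ n, 0 ≤ b n) (hbsum : HasSum b 1) (hz0 : 0 ≤ z) (hz1 : z ≤ 1) :
    Summable (fun n => b n * z^n) :=
  Summable.of_nonneg_of_le (fun n => mul_nonneg (hbnn n) (pow_nonneg hz0 n))
    (fun n => by
      calc b n * z^n ≤ b n * 1 := by
            apply mul_le_mul_of_nonneg_left (pow_le_one₀ hz0 hz1) (hbnn n)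
        _ = b n := mul_one _) hbsum.summable

lemma φβ_le_one (hφβ : ∀ z, φβ z = ∑' n : ℕ, b n * z ^ n)
    (hbnn : ∀ n, 0 ≤ b n) (hbsum : HasSum b 1) (hz0 : 0 ≤ z) (hz1 : z ≤ 1) : φβ z ≤ 1 := by
  rw [hφβ, ← hbsum.tsum_eq]
  refine Summable.tsum_le_tsum (fun n => ?_) (summable_bz hbnn hbsum hz0 hz1) hbsum.summable
  calc b n * z^n ≤ b n * 1 := by
        apply mul_le_mul_of_nonneg_left (pow_le_one₀ hz0 hz1) (hbnn n)
    _ = b n := mul_one _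

lemma φβ_nonneg (hφβ : ∀ z, φβ z = ∑' n : ℕ, b n * z ^ n)
    (hbnn : ∀ n, 0 ≤ b n) (hz0 : 0 ≤ z) : 0 ≤ φβ z := by
  rw [hφβ]
  exact tsum_nonneg (fun n => mul_nonneg (hbnn n) (pow_nonneg hz0 n))

lemma φβ_ge_b0 (hφβ : ∀ z, φβ z = ∑' n : ℕ, b n * z ^ n)
    (hbnn : ∀ n, 0 ≤ b n) (hbsum : HasSum b 1) (hz0 : 0 ≤ z) (hz1 : z ≤ 1) : b 0 ≤ φβ z := by
  rw [hφβ]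
  have := Summable.le_tsum (summable_bz hbnn hbsum hz0 hz1) 0
    (fun j _ => mul_nonneg (hbnn j) (pow_nonneg hz0 j))
  simpa using this

lemma φβ_one (hφβ : ∀ z, φβ z = ∑' n : ℕ, b n * z ^ n) (hbsum : HasSum b 1) : φβ 1 = 1 := by
  rw [hφβ]
  simp only [one_pow, mul_one]
  exact hbsum.tsum_eq

section Main
variable (hα0 : 0 < α) (hα1 : α < 1) (hbnn : ∀ n, 0 ≤ b n) (hbsum : HasSum b 1)
  (hb00 : 0 < b 0)
  (hφβ : ∀ z, φβ z = ∑' n : ℕ, b n * z ^ n)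
  (hu0 : 0 < u) (hu1 : u < 1)
  (hzl : 1 - α ≤ z) (hzu : z ≤ 1)
  (heq : z - (1 - α) = u * (α * z * φβ z))

include hα0 hα1 hzl in
lemma z_pos : 0 < z := lt_of_lt_of_le (by linarith) hzl

include hα0 hα1 hbnn hbsum hb00 hφβ hu0 hzl hzu heq in
lemma z_gt : 1 - α < z := by
  have hz0 : (0:ℝ) < z := z_pos hα0 hα1 hzl
  have h1 : b 0 ≤ φβ z := φβ_ge_b0 hφβ hbnn hbsum hz0.le hzu
  have hφpos : 0 < φβ z := lt_of_lt_of_le hb00 h1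
  have h2 : 0 < u * (α * z * φβ z) := by positivity
  linarith

include hα0 hα1 hbnn hbsum hb00 hφβ hu0 hu1 hzl hzu heq in
lemma z_lt_one : z < 1 := by
  rcases lt_or_eq_of_le hzu with h | h
  · exact h
  · exfalso
    rw [h] at heq
    rw [φβ_one hφβ hbsum] at heq
    nlinarith

include hα0 hα1 hb00 hu0 hzl hzu in
lemma den_pos : 0 < α * b 0 * u * z + (1-α) * (1-z) := by
  have hz0 : (0:ℝ) < z := z_pos hα0 hα1 hzl
  have h1 : 0 < α * b 0 * u * z := by positivity
  nlinarith

include hα0 hα1 hb00 hu0 hzl hzu in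
lemma Dv_nonneg : 0 ≤ Dv α b u z := by
  have hz0 : (0:ℝ) < z := z_pos hα0 hα1 hzl
  have := den_pos hα0 hα1 hb00 hu0 hzl hzu
  have h1 : 0 ≤ α * b 0 * u * z := by positivity
  exact div_nonneg h1 this.le

include hα0 hα1 hb00 hu0 hzl hzu in
lemma Dv_le_one : Dv α b u z ≤ 1 := by
  have := den_pos hα0 hα1 hb00 hu0 hzl hzu
  rw [Dv, div_le_one this]
  nlinarith

include hα0 hα1 hb00 hu0 hzl hzu in
lemma Hv_mem (x : ℕ) : 0 ≤ Hv α b u z x ∧ Hv α b u z x ≤ 1 := by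
  have hz0 : (0:ℝ) < z := z_pos hα0 hα1 hzl
  rw [Hv]
  by_cases hx : x = 0
  · simp [hx]
  · rw [if_neg hx]
    have hD0 := Dv_nonneg hα0 hα1 hb00 hu0 hzl hzu
    have hD1 := Dv_le_one hα0 hα1 hb00 hu0 hzl hzu
    have hzx1 : z^x ≤ 1 := pow_le_one₀ hz0.le hzu
    have hzx0 : 0 ≤ z^x := pow_nonneg hz0.le x
    constructor
    · exact mul_nonneg hzx0 hD0
    · nlinarith

-- the central algebraic identity: `Hv` satisfies the one-step equation
include hα0 hα1 hbnn hbsum hb00 hφβ hu0 hu1 hzl hzu heq in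
set_option maxHeartbeats 2000000 in
lemma Hv_step (x : ℕ) (hx : x ≠ 0) :
    Hv α b u z x = u * ∑' de : ℕ×ℕ,
      (α*(1-α)^de.1 * b de.2) * Hv α b u z ((x - de.1) + de.2) := by
  have hz0 : (0:ℝ) < z := z_pos hα0 hα1 hzl
  have hzgt : 1 - α < z := z_gt hα0 hα1 hbnn hbsum hb00 hφβ hu0 hzl hzu heq
  have hzlt : z < 1 := z_lt_one hα0 hα1 hbnn hbsum hb00 hφβ hu0 hu1 hzl hzu heq
  have hden : 0 < α * b 0 * u * z + (1-α) * (1-z) := den_pos hα0 hα1 hb00 hu0 hzl hzu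
  set D := Dv α b u z with hD
  set pb := φβ z with hpb
  have hpb_nonneg : 0 ≤ pb := φβ_nonneg hφβ hbnn hz0.le
  -- summable families
  have hsA : Summable (fun d : ℕ => α*(1-α)^d * z^(x-d)) := by
    refine Summable.of_nonneg_of_le
      (fun d => mul_nonneg (geo_nonneg hα0 hα1 d) (pow_nonneg hz0.le _)) (fun d => ?_)
      (summable_geo hα0 hα1)
    calc α*(1-α)^d * z^(x-d) ≤ α*(1-α)^d * 1 := by
          apply mul_le_mul_of_nonneg_left (pow_le_one₀ hz0.le hzlt.le)
            (geo_nonneg hα0 hα1 d)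
      _ = α*(1-α)^d := mul_one _
  have hsB : HasSum (fun e : ℕ => b e * z^e) pb := by
    rw [hpb, hφβ]
    exact (summable_bz hbnn hbsum hz0.le hzlt.le).hasSum
  have hsAB : Summable (fun de : ℕ×ℕ => (α*(1-α)^de.1 * z^(x-de.1)) * (b de.2 * z^de.2)) :=
    Summable.mul_of_nonneg hsA hsB.summable
      (fun d => mul_nonneg (geo_nonneg hα0 hα1 d) (pow_nonneg hz0.le _))
      (fun e => mul_nonneg (hbnn e) (pow_nonneg hz0.le e))
  set A := ∑' d : ℕ, α*(1-α)^d * z^(x-d) with hA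
  have hABsum : HasSum (fun de : ℕ×ℕ => (α*(1-α)^de.1 * z^(x-de.1)) * (b de.2 * z^de.2))
      (A * pb) := HasSum.mul hsA.hasSum hsB hsAB
  -- pointwise splitting
  have hsplit : ∀ de : ℕ×ℕ, (α*(1-α)^de.1 * b de.2) * Hv α b u z ((x - de.1) + de.2) =
      ((α*(1-α)^de.1 * z^(x-de.1)) * (b de.2 * z^de.2)) * D +
        (if (x - de.1) + de.2 = 0 then (α*(1-α)^de.1 * b de.2) * (1 - D) else 0) := by
    rintro ⟨d, e⟩
    by_cases h0 : (x - d) + e = 0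
    · have hd : x - d = 0 := by omega
      have he : e = 0 := by omega
      rw [if_pos h0, Hv, if_pos h0, hd, he]
      simp only [pow_zero]
      ring
    · rw [if_neg h0, Hv, if_neg h0, add_zero]
      have : z ^ ((x - d) + e) = z^(x-d) * z^e := pow_add z _ _
      rw [this]
      ring
  -- the boundary sum
  have hbd : (∑' de : ℕ×ℕ, (if (x - de.1) + de.2 = 0 then (α*(1-α)^de.1 * b de.2) else 0))
      = b 0 * (1-α)^x := by
    have hsummable : Summable (fun de : ℕ×ℕ =>
        (if (x - de.1) + de.2 = 0 then (α*(1-α)^de.1 * b de.2) else 0)) := by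
      refine Summable.of_nonneg_of_le (fun de => ?_) (fun de => ?_)
        (summable_w hα0 hα1 hbnn hbsum)
      · split <;> [exact mul_nonneg (geo_nonneg hα0 hα1 _) (hbnn _); exact le_rfl]
      · split
        · exact le_rfl
        · exact mul_nonneg (geo_nonneg hα0 hα1 _) (hbnn _)
    rw [Summable.tsum_prod' hsummable hsummable.prod_factor]
    have hinner : ∀ d : ℕ, (∑' e : ℕ, (if (x - d) + e = 0 then (α*(1-α)^d * b e) else 0))
        = if x ≤ d then α*(1-α)^d * b 0 else 0 := by
      intro d
      by_cases hd : x ≤ d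
      · have hxd : x - d = 0 := by omega
        rw [if_pos hd]
        have : ∀ e : ℕ, (if (x - d) + e = 0 then (α*(1-α)^d * b e) else 0) =
            (if e = 0 then α*(1-α)^d * b 0 else 0) := by
          intro e
          by_cases he : e = 0
          · subst he; rw [if_pos (by omega), if_pos rfl]
          · rw [if_neg (by omega), if_neg he]
        rw [tsum_congr this, tsum_ite_eq]
      · rw [if_neg hd]
        have : ∀ e : ℕ, (if (x - d) + e = 0 then (α*(1-α)^d * b e) else 0) = 0 := by
          intro e
          rw [if_neg (by omega)]
        rw [tsum_congr this, tsum_zero]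
    rw [tsum_congr hinner]
    have hsum2 : Summable (fun d : ℕ => if x ≤ d then α*(1-α)^d * b 0 else 0) := by
      refine Summable.of_nonneg_of_le (fun d => ?_) (fun d => ?_)
        ((summable_geo hα0 hα1).mul_right (b 0))
      · split <;> [exact mul_nonneg (geo_nonneg hα0 hα1 _) hb00.le; exact le_rfl]
      · split
        · exact le_rfl
        · exact mul_nonneg (geo_nonneg hα0 hα1 _) hb00.le
    have := Summable.sum_add_tsum_nat_add (f := fun d : ℕ => if x ≤ d then α*(1-α)^d * b 0 else 0)
      x hsum2
    have hzero : (∑ i ∈ Finset.range x, if x ≤ i then α*(1-α)^i * b 0 else 0) = 0 := by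
      refine Finset.sum_eq_zero (fun i hi => ?_)
      rw [Finset.mem_range] at hi
      rw [if_neg (by omega)]
    rw [hzero, zero_add] at this
    rw [← this]
    have : ∀ i : ℕ, (if x ≤ i + x then α*(1-α)^(i+x) * b 0 else 0) =
        (α * b 0 * (1-α)^x) * (1-α)^i := by
      intro i
      rw [if_pos (by omega), pow_add]
      ring
    rw [tsum_congr this, tsum_mul_left, tsum_geometric_of_lt_one (by linarith) (by linarith)]
    have : 1 - (1-α) = α := by ring
    rw [this]
    field_simp
  -- compute A
  have hzne : z - (1-α) ≠ 0 := by linarith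
  have hAval : A = α * z * ((z^x - (1-α)^x) / (z - (1-α))) + (1-α)^x := by
    rw [hA]
    have := Summable.sum_add_tsum_nat_add (f := fun d : ℕ => α*(1-α)^d * z^(x-d)) x hsA
    rw [← this]
    have htail : (∑' i : ℕ, α*(1-α)^(i+x) * z^(x-(i+x))) = (1-α)^x := by
      have : ∀ i : ℕ, α*(1-α)^(i+x) * z^(x-(i+x)) = (α * (1-α)^x) * (1-α)^i := by
        intro i
        have hx0 : x - (i+x) = 0 := by omega
        rw [hx0, pow_zero, pow_add]
        ring
      rw [tsum_congr this, tsum_mul_left, tsum_geometric_of_lt_one (by linarith) (by linarith)]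
      have h2 : 1 - (1-α) = α := by ring
      rw [h2]
      field_simp
    have hfin : (∑ d ∈ Finset.range x, α*(1-α)^d * z^(x-d)) =
        α * z * ((z^x - (1-α)^x) / (z - (1-α))) := by
      have hterm : ∀ d ∈ Finset.range x, α*(1-α)^d * z^(x-d) =
          (α * z) * ((1-α)^d * z^(x-1-d)) := by
        intro d hd
        rw [Finset.mem_range] at hd
        have : x - d = (x - 1 - d) + 1 := by omega
        rw [this, pow_succ]
        ring
      rw [Finset.sum_congr rfl hterm, ← Finset.mul_sum]
      congr 1
      have hg := geom_sum₂_mul (1-α) z x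
      have : (∑ i ∈ Finset.range x, (1-α)^i * z^(x-1-i)) = ((1-α)^x - z^x) / ((1-α) - z) := by
        rw [eq_div_iff (by linarith : (1-α) - z ≠ 0)]
        exact hg
      rw [this]
      rw [div_eq_div_iff (by linarith : (1-α) - z ≠ 0) hzne]
      ring
    rw [htail, hfin]
  -- assemble
  have hmain : (∑' de : ℕ×ℕ, (α*(1-α)^de.1 * b de.2) * Hv α b u z ((x - de.1) + de.2))
      = A * pb * D + (b 0 * (1-α)^x) * (1 - D) := by
    rw [tsum_congr hsplit]
    rw [Summable.tsum_add (hsAB.mul_right D) (by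
      refine Summable.of_nonneg_of_le (fun de => ?_) (fun de => ?_)
        ((summable_w hα0 hα1 hbnn hbsum).mul_right (1 - D))
      · have hD1 : D ≤ 1 := Dv_le_one hα0 hα1 hb00 hu0 hzl hzu
        split
        · exact mul_nonneg (mul_nonneg (geo_nonneg hα0 hα1 _) (hbnn _)) (by linarith)
        · exact le_rfl
      · have hD1 : D ≤ 1 := Dv_le_one hα0 hα1 hb00 hu0 hzl hzu
        split
        · exact le_rfl
        · exact mul_nonneg (mul_nonneg (geo_nonneg hα0 hα1 _) (hbnn _)) (by linarith))]
    congr 1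
    · rw [tsum_mul_right, hABsum.tsum_eq]
    · have : ∀ de : ℕ×ℕ, (if (x - de.1) + de.2 = 0 then (α*(1-α)^de.1 * b de.2) * (1-D) else 0)
          = (if (x - de.1) + de.2 = 0 then (α*(1-α)^de.1 * b de.2) else 0) * (1-D) := by
        intro de
        split <;> simp
      rw [tsum_congr this, tsum_mul_right, hbd]
  rw [hmain]
  -- final algebra
  have hpbv : pb = (z - (1-α)) / (u * (α * z)) := by
    rw [eq_div_iff (by positivity)]
    rw [heq]
    ring
  rw [hAval, Hv, if_neg hx, hD, Dv, hpbv]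
  have h1 : α * b 0 * u * z + (1-α) * (1-z) ≠ 0 := ne_of_gt hden
  have h2 : u * (α * z) ≠ 0 := by positivity
  field_simp
  ring

end Main

end ZFacts

end Stmt15

namespace Stmt15

section Contraction

variable {α : ℝ} {b : ℕ → ℝ} {φβ : ℝ → ℝ} {u : ℝ} {zfun : ℝ → ℝ}

lemma F_eq_Hv (hα0 : 0 < α) (hα1 : α < 1) (hbnn : ∀ n, 0 ≤ b n) (hbsum : HasSum b 1)
    (hb00 : 0 < b 0) (hφβ : ∀ z, φβ z = ∑' n : ℕ, b n * z ^ n)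
    (hzfun : ∀ u ∈ Icc (0:ℝ) 1, zfun u ∈ Icc (1-α) 1 ∧
      zfun u - (1 - α) = u * (α * zfun u * φβ (zfun u)))
    (hq1 : ∀ x, (∑' n, q α b x n) ≤ 1)
    (hu0 : 0 < u) (hu1 : u < 1) (x : ℕ) :
    F α b u x = Hv α b u (zfun u) x := by
  obtain ⟨⟨hzl, hzu⟩, heq⟩ := hzfun u ⟨hu0.le, hu1.le⟩
  set z := zfun u with hzdef
  have key : ∀ N x, |F α b u x - Hv α b u z x| ≤ u^N := by
    intro N
    induction N with
    | zero =>
        intro x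
        rw [pow_zero, abs_sub_le_iff]
        have h1 := F_nonneg (α := α) (b := b) u x
        have h2 := F_le_one hu0.le hu1.le hq1 x
        have h3 := Hv_mem hα0 hα1 hb00 hu0 hzl hzu x
        constructor <;> linarith [h3.1, h3.2]
    | succ N ih =>
        intro x
        by_cases hx : x = 0
        · subst hx
          rw [F_zero_start, Hv, if_pos rfl, sub_self, abs_zero]
          positivity
        · rw [F_eq hα0 hα1 hbnn hbsum hu0.le hu1.le hq1 hx,
            Hv_step hα0 hα1 hbnn hbsum hb00 hφβ hu0 hu1 hzl hzu heq x hx]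
          have hsF : Summable (fun de : ℕ×ℕ =>
              (α*(1-α)^de.1 * b de.2) * F α b u ((x - de.1) + de.2)) := by
            refine summable_wF hα0 hα1 hbnn hbsum (C := 1) (fun y => ?_)
            rw [abs_of_nonneg (F_nonneg u y)]
            exact F_le_one hu0.le hu1.le hq1 y
          have hsH : Summable (fun de : ℕ×ℕ =>
              (α*(1-α)^de.1 * b de.2) * Hv α b u z ((x - de.1) + de.2)) := by
            refine summable_wF hα0 hα1 hbnn hbsum (C := 1) (fun y => ?_)
            have := Hv_mem hα0 hα1 hb00 hu0 hzl hzu y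
            rw [abs_of_nonneg this.1]
            exact this.2
          rw [← mul_sub, ← Summable.tsum_sub hsF hsH, abs_mul, abs_of_nonneg hu0.le]
          have hsd : Summable (fun de : ℕ×ℕ =>
              (α*(1-α)^de.1 * b de.2) * F α b u ((x - de.1) + de.2) -
              (α*(1-α)^de.1 * b de.2) * Hv α b u z ((x - de.1) + de.2)) := hsF.sub hsH
          have habs : |∑' de : ℕ×ℕ,
              ((α*(1-α)^de.1 * b de.2) * F α b u ((x - de.1) + de.2) -
               (α*(1-α)^de.1 * b de.2) * Hv α b u z ((x - de.1) + de.2))| ≤ u^N := by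
            have habs0 : |∑' de : ℕ×ℕ,
                ((α*(1-α)^de.1 * b de.2) * F α b u ((x - de.1) + de.2) -
                 (α*(1-α)^de.1 * b de.2) * Hv α b u z ((x - de.1) + de.2))| ≤
                ∑' de : ℕ×ℕ,
                |(α*(1-α)^de.1 * b de.2) * F α b u ((x - de.1) + de.2) -
                 (α*(1-α)^de.1 * b de.2) * Hv α b u z ((x - de.1) + de.2)| := by
              simpa using norm_tsum_le_tsum_norm (f := fun de : ℕ×ℕ =>
                (α*(1-α)^de.1 * b de.2) * F α b u ((x - de.1) + de.2) -
                (α*(1-α)^de.1 * b de.2) * Hv α b u z ((x - de.1) + de.2))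
                (by simpa [Real.norm_eq_abs] using hsd.abs)
            refine le_trans habs0 ?_
            have hle : ∀ de : ℕ×ℕ,
                |(α*(1-α)^de.1 * b de.2) * F α b u ((x - de.1) + de.2) -
                 (α*(1-α)^de.1 * b de.2) * Hv α b u z ((x - de.1) + de.2)| ≤
                (α*(1-α)^de.1 * b de.2) * u^N := by
              intro de
              rw [← mul_sub, abs_mul,
                abs_of_nonneg (mul_nonneg (geo_nonneg hα0 hα1 _) (hbnn _))]
              exact mul_le_mul_of_nonneg_left (ih _)
                (mul_nonneg (geo_nonneg hα0 hα1 _) (hbnn _))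
            refine le_trans (Summable.tsum_le_tsum hle hsd.abs ((summable_w hα0 hα1 hbnn hbsum).mul_right _)) ?_
            rw [tsum_mul_right, (hasSum_w hα0 hα1 hbnn hbsum).tsum_eq, one_mul]
          calc u * |∑' de : ℕ×ℕ,
              ((α*(1-α)^de.1 * b de.2) * F α b u ((x - de.1) + de.2) -
               (α*(1-α)^de.1 * b de.2) * Hv α b u z ((x - de.1) + de.2))|
              ≤ u * u^N := mul_le_mul_of_nonneg_left habs hu0.le
            _ = u^(N+1) := by ring
  have h0 : |F α b u x - Hv α b u z x| ≤ 0 := by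
    refine ge_of_tendsto (tendsto_pow_atTop_nhds_zero_of_lt_one hu0.le hu1)
      (Filter.Eventually.of_forall (fun N => key N x))
  have := abs_nonneg (F α b u x - Hv α b u z x)
  have : |F α b u x - Hv α b u z x| = 0 := le_antisymm h0 this
  linarith [abs_eq_zero.mp this, sub_eq_zero.mp (abs_eq_zero.mp this)]

end Contraction

end Stmt15

namespace Stmt15

section Limits

variable {α : ℝ} {b : ℕ → ℝ} {φβ : ℝ → ℝ} {μβ : ℝ} {zfun : ℝ → ℝ}

noncomputable def uk (k : ℕ) : ℝ := 1 - ((k:ℝ)+2)⁻¹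

lemma uk_mem (k : ℕ) : 0 < uk k ∧ uk k < 1 := by
  have h2 : (2:ℝ) ≤ (k:ℝ)+2 := by
    have := Nat.cast_nonneg (α := ℝ) k
    linarith
  have hpos : (0:ℝ) < (k:ℝ)+2 := by linarith
  constructor
  · have : ((k:ℝ)+2)⁻¹ ≤ 2⁻¹ := by
      apply inv_anti₀ (by norm_num) h2
    rw [uk]; norm_num at this ⊢; linarith
  · rw [uk]
    have : 0 < ((k:ℝ)+2)⁻¹ := inv_pos.mpr hpos
    linarith

lemma uk_mono : Monotone uk := by
  intro j k hjk
  rw [uk, uk]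
  have hj : (0:ℝ) < (j:ℝ)+2 := by positivity
  have : ((k:ℝ)+2)⁻¹ ≤ ((j:ℝ)+2)⁻¹ := by
    apply inv_anti₀ hj
    have : (j:ℝ) ≤ (k:ℝ) := Nat.cast_le.mpr hjk
    linarith
  linarith

lemma uk_tendsto : Filter.Tendsto uk Filter.atTop (nhds 1) := by
  have h : Filter.Tendsto (fun k : ℕ => ((k:ℝ)+2)) Filter.atTop Filter.atTop :=
    Filter.tendsto_atTop_add_const_right _ 2 tendsto_natCast_atTop_atTop
  have h2 : Filter.Tendsto (fun k : ℕ => ((k:ℝ)+2)⁻¹) Filter.atTop (nhds 0) :=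
    tendsto_inv_atTop_zero.comp h
  have := Filter.Tendsto.sub (tendsto_const_nhds (x := (1:ℝ))) h2
  rw [sub_zero] at this; exact this

lemma μβ_nonneg (hbnn : ∀ n, 0 ≤ b n) (hμβ : HasSum (fun n : ℕ => (n : ℝ) * b n) μβ) :
    0 ≤ μβ :=
  hasSum_le (fun n => mul_nonneg (Nat.cast_nonneg n) (hbnn n)) hasSum_zero hμβ

lemma hasSum_np1 (hbsum : HasSum b 1) (hμβ : HasSum (fun n : ℕ => (n : ℝ) * b n) μβ) :
    HasSum (fun n : ℕ => ((n:ℝ)+1) * b n) (μβ + 1) := by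
  have := hμβ.add hbsum
  convert this using 2 with n
  ring

lemma φβ_lower (hbnn : ∀ n, 0 ≤ b n) (hbsum : HasSum b 1)
    (hμβ : HasSum (fun n : ℕ => (n : ℝ) * b n) μβ)
    (hφβ : ∀ z, φβ z = ∑' n : ℕ, b n * z ^ n)
    {z : ℝ} (hz0 : 0 ≤ z) (hz1 : z ≤ 1) : 1 - μβ * (1-z) ≤ φβ z := by
  rw [hφβ]
  have hsum : HasSum (fun n : ℕ => b n - ((n:ℝ) * b n) * (1-z)) (1 - μβ * (1-z)) :=
    hbsum.sub (hμβ.mul_right (1-z))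
  refine hasSum_le (fun n => ?_) hsum (summable_bz hbnn hbsum hz0 hz1).hasSum
  have hber : 1 + (n:ℝ) * (z - 1) ≤ z^n := by
    have := one_add_mul_le_pow (a := z - 1) (by linarith) n
    have hz : 1 + (z-1) = z := by ring
    rwa [hz] at this
  have := mul_le_mul_of_nonneg_left hber (hbnn n)
  calc b n - ((n:ℝ) * b n) * (1-z) = b n * (1 + (n:ℝ) * (z-1)) := by ring
    _ ≤ b n * z^n := this

lemma z_sq_bound (hα0 : 0 < α) (hα1 : α < 1) (hbnn : ∀ n, 0 ≤ b n) (hbsum : HasSum b 1)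
    (hμβ : HasSum (fun n : ℕ => (n : ℝ) * b n) μβ) (hrec : μβ ≤ (1 - α) / α)
    (hφβ : ∀ z, φβ z = ∑' n : ℕ, b n * z ^ n)
    {u z : ℝ} (hu0 : 0 < u) (hu1 : u < 1) (hzl : 1 - α ≤ z) (hzu : z ≤ 1)
    (heq : z - (1 - α) = u * (α * z * φβ z)) :
    (1-α) * (1-z)^2 ≤ (1-u) * α := by
  have hz0 : (0:ℝ) < z := by linarith
  have hμβ0 : 0 ≤ μβ := μβ_nonneg hbnn hμβ
  have hαμ : α * μβ ≤ 1 - α := by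
    rw [div_eq_mul_inv] at hrec
    calc α * μβ ≤ α * ((1-α) * α⁻¹) := by
          apply mul_le_mul_of_nonneg_left hrec hα0.le
      _ = 1 - α := by field_simp
  have hlow : 1 - μβ * (1-z) ≤ φβ z := φβ_lower hbnn hbsum hμβ hφβ hz0.le hzu
  have hφ1 : φβ z ≤ 1 := φβ_le_one hφβ hbnn hbsum hz0.le hzu
  have hφ0 : 0 ≤ φβ z := φβ_nonneg hφβ hbnn hz0.le
  have h1 : (1-u) * (α*z*φβ z) = α*z*φβ z - (z-(1-α)) := by
    rw [heq] at *
    ring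
  have h2 : α*z*(1 - μβ*(1-z)) ≤ α*z*φβ z :=
    mul_le_mul_of_nonneg_left hlow (by positivity)
  have h4 : α*z*(1-μβ*(1-z)) - (z-(1-α)) = (1-z)*((1-α) - α*μβ*z) := by ring
  have h3 : (1-α)*(1-z)^2 ≤ (1-z)*((1-α) - α*μβ*z) := by
    nlinarith [mul_nonneg (sub_nonneg.mpr hzu) (mul_nonneg hz0.le (sub_nonneg.mpr hαμ))]
  have h5 : (1-u)*(α*z*φβ z) ≤ (1-u)*α := by
    have hzφ : z * φβ z ≤ 1 := mul_le_one₀ hzu hφ0 hφ1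
    have h := mul_le_mul_of_nonneg_left hzφ (show (0:ℝ) ≤ (1-u)*α from mul_nonneg (by linarith) hα0.le)
    calc (1-u)*(α*z*φβ z) = (1-u)*α*(z*φβ z) := by ring
      _ ≤ (1-u)*α*1 := by linarith
      _ = (1-u)*α := by ring
  linarith

lemma zk_to_one (hα0 : 0 < α) (hα1 : α < 1) (hbnn : ∀ n, 0 ≤ b n) (hbsum : HasSum b 1)
    (hμβ : HasSum (fun n : ℕ => (n : ℝ) * b n) μβ) (hrec : μβ ≤ (1 - α) / α)
    (hφβ : ∀ z, φβ z = ∑' n : ℕ, b n * z ^ n)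
    (hzfun : ∀ u ∈ Icc (0:ℝ) 1, zfun u ∈ Icc (1-α) 1 ∧
      zfun u - (1 - α) = u * (α * zfun u * φβ (zfun u))) :
    Filter.Tendsto (fun k => zfun (uk k)) Filter.atTop (nhds 1) := by
  have hbd : ∀ k, 1 - zfun (uk k) ≤ Real.sqrt ((α/(1-α)) * ((k:ℝ)+2)⁻¹) := by
    intro k
    obtain ⟨hu0, hu1⟩ := uk_mem k
    obtain ⟨⟨hzl, hzu⟩, heq⟩ := hzfun (uk k) ⟨(uk_mem k).1.le, (uk_mem k).2.le⟩
    have hb := z_sq_bound hα0 hα1 hbnn hbsum hμβ hrec hφβ hu0 hu1 hzl hzu heq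
    have h1u : 1 - uk k = ((k:ℝ)+2)⁻¹ := by rw [uk]; ring
    rw [h1u] at hb
    have hα' : (0:ℝ) < 1 - α := by linarith
    have h1z : 0 ≤ 1 - zfun (uk k) := by linarith
    have hx2 : (1 - zfun (uk k))^2 ≤ α / (1-α) * (((k:ℝ))+2)⁻¹ := by
      rw [div_mul_eq_mul_div, le_div_iff₀ hα']
      nlinarith
    calc 1 - zfun (uk k) = Real.sqrt ((1 - zfun (uk k))^2) := (Real.sqrt_sq h1z).symm
      _ ≤ Real.sqrt (α / (1-α) * (((k:ℝ))+2)⁻¹) := Real.sqrt_le_sqrt hx2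
  have hlim : Filter.Tendsto (fun k : ℕ => Real.sqrt ((α/(1-α)) * ((k:ℝ)+2)⁻¹))
      Filter.atTop (nhds 0) := by
    have h : Filter.Tendsto (fun k : ℕ => ((k:ℝ)+2)) Filter.atTop Filter.atTop :=
      Filter.tendsto_atTop_add_const_right _ 2 tendsto_natCast_atTop_atTop
    have h2 : Filter.Tendsto (fun k : ℕ => ((k:ℝ)+2)⁻¹) Filter.atTop (nhds 0) :=
      tendsto_inv_atTop_zero.comp h
    have h3 := h2.const_mul (α/(1-α))
    rw [mul_zero] at h3
    have := h3.sqrt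
    rwa [Real.sqrt_zero] at this
  have hsq : Filter.Tendsto (fun k => 1 - zfun (uk k)) Filter.atTop (nhds 0) := by
    refine squeeze_zero (fun k => ?_) hbd hlim
    obtain ⟨⟨hzl, hzu⟩, _⟩ := hzfun (uk k) ⟨(uk_mem k).1.le, (uk_mem k).2.le⟩
    linarith
  have := (tendsto_const_nhds (x := (1:ℝ))).sub hsq
  simpa using this

lemma Dv_tendsto (hα0 : 0 < α) (hα1 : α < 1) (hb00 : 0 < b 0)
    (hzk : Filter.Tendsto (fun k => zfun (uk k)) Filter.atTop (nhds 1)) :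
    Filter.Tendsto (fun k => Dv α b (uk k) (zfun (uk k))) Filter.atTop (nhds 1) := by
  have hnum : Filter.Tendsto (fun k => α * b 0 * uk k * zfun (uk k)) Filter.atTop
      (nhds (α * b 0)) := by
    have := ((tendsto_const_nhds (x := α * b 0)).mul uk_tendsto).mul hzk
    simpa using this
  have hden : Filter.Tendsto (fun k => α * b 0 * uk k * zfun (uk k) +
      (1-α) * (1 - zfun (uk k))) Filter.atTop (nhds (α * b 0)) := by
    have h2 : Filter.Tendsto (fun k => (1-α) * (1 - zfun (uk k))) Filter.atTop (nhds 0) := by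
      have := ((tendsto_const_nhds (x := (1:ℝ))).sub hzk).const_mul (1-α)
      simpa using this
    have := hnum.add h2
    simpa using this
  have hne : α * b 0 ≠ 0 := by positivity
  have := hnum.div hden hne
  have hval : α * b 0 / (α * b 0) = 1 := div_self hne
  rw [hval] at this
  exact this

lemma zfun_one (hα0 : 0 < α) (hα1 : α < 1) (hbnn : ∀ n, 0 ≤ b n) (hbsum : HasSum b 1)
    (hb01 : b 0 < 1)
    (hμβ : HasSum (fun n : ℕ => (n : ℝ) * b n) μβ) (hrec : μβ ≤ (1 - α) / α)
    (hφβ : ∀ z, φβ z = ∑' n : ℕ, b n * z ^ n)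
    (hzfun : ∀ u ∈ Icc (0:ℝ) 1, zfun u ∈ Icc (1-α) 1 ∧
      zfun u - (1 - α) = u * (α * zfun u * φβ (zfun u))) :
    zfun 1 = 1 := by
  obtain ⟨⟨hzl, hzu⟩, heq⟩ := hzfun 1 ⟨zero_le_one, le_refl 1⟩
  set z := zfun 1 with hzdef
  rcases eq_or_lt_of_le hzu with h | hzlt
  · exact h
  exfalso
  have hz0 : (0:ℝ) < z := by linarith
  have hμβ0 : 0 ≤ μβ := μβ_nonneg hbnn hμβ
  have hαμ : α * μβ ≤ 1 - α := by
    rw [div_eq_mul_inv] at hrec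
    calc α * μβ ≤ α * ((1-α) * α⁻¹) := by
          apply mul_le_mul_of_nonneg_left hrec hα0.le
      _ = 1 - α := by field_simp
  have hμβpos : 0 < μβ := by
    rcases lt_or_eq_of_le hμβ0 with h | h
    · exact h
    exfalso
    have hzero : ∀ n : ℕ, (n:ℝ) * b n = 0 := by
      have := (hasSum_zero_iff_of_nonneg
        (fun n => mul_nonneg (Nat.cast_nonneg n) (hbnn n))).mp (h ▸ hμβ)
      exact fun n => congrFun this n
    have hbn : ∀ n : ℕ, n ≠ 0 → b n = 0 := by
      intro n hn
      have := hzero n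
      have hne : (n:ℝ) ≠ 0 := Nat.cast_ne_zero.mpr hn
      exact (mul_eq_zero.mp this).resolve_left hne
    have : HasSum b (b 0) := by
      have : b = fun n => if n = 0 then b 0 else 0 := by
        funext n
        by_cases hn : n = 0
        · simp [hn]
        · simp [hn, hbn n hn]
      rw [this]
      exact hasSum_ite_eq 0 (b 0)
    have := hbsum.unique this
    linarith
  have hlow : 1 - μβ * (1-z) ≤ φβ z := φβ_lower hbnn hbsum hμβ hφβ hz0.le hzu
  -- heq : z - (1-α) = 1 * (α*z*φβ z)
  rw [one_mul] at heq
  have h2 : α*z*(1 - μβ*(1-z)) ≤ α*z*φβ z :=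
    mul_le_mul_of_nonneg_left hlow (by positivity)
  have h4 : α*z*(1-μβ*(1-z)) - (z-(1-α)) = (1-z)*((1-α) - α*μβ*z) := by ring
  -- (1-z) > 0 and (1-α) - αμβ z > 0, so LHS of h4 is > 0, but heq says αzφβ = z-(1-α)
  have h5 : 0 < (1-α) - α*μβ*z := by
    rcases lt_or_eq_of_le hαμ with h | h
    · nlinarith
    · -- α*μβ = 1-α : then α*μβ*z < α*μβ = 1-α since z < 1 and αμβ > 0
      nlinarith
  nlinarith

end Limits

end Stmt15

namespace Stmt15

section Mean

open Filter

variable {α : ℝ} {b : ℕ → ℝ} {φβ : ℝ → ℝ} {μβ : ℝ} {zfun : ℝ → ℝ}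

lemma tsum_q_one (hα0 : 0 < α) (hα1 : α < 1) (hbnn : ∀ n, 0 ≤ b n) (hbsum : HasSum b 1)
    (hb00 : 0 < b 0)
    (hμβ : HasSum (fun n : ℕ => (n : ℝ) * b n) μβ) (hrec : μβ ≤ (1 - α) / α)
    (hφβ : ∀ z, φβ z = ∑' n : ℕ, b n * z ^ n)
    (hzfun : ∀ u ∈ Icc (0:ℝ) 1, zfun u ∈ Icc (1-α) 1 ∧
      zfun u - (1 - α) = u * (α * zfun u * φβ (zfun u)))
    (hq1 : ∀ x, (∑' n, q α b x n) ≤ 1) {x₀ : ℕ} (hx₀ : x₀ ≠ 0) :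
    (∑' n, q α b x₀ n) = 1 := by
  refine le_antisymm (hq1 x₀) ?_
  have hzk := zk_to_one hα0 hα1 hbnn hbsum hμβ hrec hφβ hzfun
  have hDk := Dv_tendsto hα0 hα1 hb00 hzk
  have hFE : ∀ k, FE α b (uk k) x₀ =
      ENNReal.ofReal ((zfun (uk k))^x₀ * Dv α b (uk k) (zfun (uk k))) := by
    intro k
    obtain ⟨hu0, hu1⟩ := uk_mem k
    have h1 : FE α b (uk k) x₀ = ENNReal.ofReal (F α b (uk k) x₀) := by
      rw [F, ENNReal.ofReal_toReal (FE_ne_top hu0.le hu1.le hq1 x₀)]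
    rw [h1, F_eq_Hv hα0 hα1 hbnn hbsum hb00 hφβ hzfun hq1 hu0 hu1 x₀, Hv, if_neg hx₀]
  have hle : ∀ k, FE α b (uk k) x₀ ≤ ∑' n, q α b x₀ n := by
    intro k
    refine Summable.tsum_le_tsum (fun n => ?_) ENNReal.summable ENNReal.summable
    calc (ENNReal.ofReal (uk k))^n * q α b x₀ n ≤ 1^n * q α b x₀ n := by
          gcongr
          exact ENNReal.ofReal_le_one.mpr (uk_mem k).2.le
      _ = q α b x₀ n := by rw [one_pow, one_mul]
  have hlim : Tendsto (fun k => FE α b (uk k) x₀) atTop (nhds 1) := by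
    have hreal : Tendsto (fun k => (zfun (uk k))^x₀ * Dv α b (uk k) (zfun (uk k)))
        atTop (nhds 1) := by
      have := (hzk.pow x₀).mul hDk
      simpa using this
    have h2 := (ENNReal.continuous_ofReal.tendsto 1).comp hreal
    have h3 : Tendsto (fun k => ENNReal.ofReal
        ((zfun (uk k))^x₀ * Dv α b (uk k) (zfun (uk k)))) atTop (nhds 1) := by
      simpa [Function.comp_def] using h2
    refine h3.congr (fun k => (hFE k).symm)
  exact le_of_tendsto hlim (Eventually.of_forall hle)

lemma geom_partial {u : ℝ} (hu : u ≠ 1) (n : ℕ) :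
    (∑ j ∈ Finset.range n, u^j) = (1-u^n)/(1-u) := by
  rw [eq_div_iff (by intro h; apply hu; linarith : (1:ℝ) - u ≠ 0)]
  have := geom_sum_mul u n
  nlinarith [this]

lemma summable_geom_cc (hq1 : ∀ x, (∑' n, q α b x n) ≤ 1) {u : ℝ} (hu0 : 0 ≤ u) (hu1 : u ≤ 1)
    (x₀ : ℕ) : Summable (fun n => u^n * cc α b x₀ n) := by
  refine Summable.of_nonneg_of_le (fun n => mul_nonneg (pow_nonneg hu0 n) (cc_nonneg x₀ n))
    (fun n => ?_) (summable_cc hq1 x₀)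
  calc u^n * cc α b x₀ n ≤ 1 * cc α b x₀ n := by
        apply mul_le_mul_of_nonneg_right (pow_le_one₀ hu0 hu1) (cc_nonneg x₀ n)
    _ = cc α b x₀ n := one_mul _

lemma one_sub_F_div (hq1 : ∀ x, (∑' n, q α b x n) ≤ 1)
    (hc1 : (∑' n, cc α b x₀ n) = 1) {u : ℝ} (hu0 : 0 < u) (hu1 : u < 1) :
    (∑' n : ℕ, (∑ j ∈ Finset.range n, u^j) * cc α b x₀ n) = (1 - F α b u x₀)/(1-u) := by
  have hsc := summable_cc hq1 x₀
  have hsu := summable_geom_cc hq1 hu0.le hu1.le x₀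
  have hkey : ∀ n : ℕ, (∑ j ∈ Finset.range n, u^j) * cc α b x₀ n =
      (cc α b x₀ n - u^n * cc α b x₀ n)/(1-u) := by
    intro n
    rw [geom_partial (ne_of_lt hu1) n]
    field_simp
  rw [tsum_congr hkey, tsum_div_const, Summable.tsum_sub hsc hsu, hc1, F_tsum hu0.le hq1 x₀]

lemma summable_geom_sum_cc (hq1 : ∀ x, (∑' n, q α b x n) ≤ 1)
    {u : ℝ} (hu0 : 0 < u) (hu1 : u < 1) (x₀ : ℕ) :
    Summable (fun n : ℕ => (∑ j ∈ Finset.range n, u^j) * cc α b x₀ n) := by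
  have hkey : ∀ n : ℕ, (∑ j ∈ Finset.range n, u^j) * cc α b x₀ n =
      (cc α b x₀ n - u^n * cc α b x₀ n)/(1-u) := by
    intro n
    rw [geom_partial (ne_of_lt hu1) n]
    field_simp
  have := ((summable_cc hq1 x₀).sub (summable_geom_cc hq1 hu0.le hu1.le x₀)).div_const (1-u)
  exact this.congr (fun n => (hkey n).symm)

/-- `Sv z = ∑ b n (1 + z + ... + z^n)` -/
noncomputable def Sv (b : ℕ → ℝ) (z : ℝ) : ℝ := ∑' n, b n * (∑ j ∈ Finset.range (n+1), z^j)

lemma Sv_bound_term (hbnn : ∀ n, 0 ≤ b n) {z : ℝ} (hz0 : 0 ≤ z) (hz1 : z ≤ 1) (n : ℕ) :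
    b n * (∑ j ∈ Finset.range (n+1), z^j) ≤ ((n:ℝ)+1) * b n := by
  have h1 : (∑ j ∈ Finset.range (n+1), z^j) ≤ ((n:ℝ)+1) := by
    calc (∑ j ∈ Finset.range (n+1), z^j) ≤ ∑ j ∈ Finset.range (n+1), 1 :=
          Finset.sum_le_sum (fun j _ => pow_le_one₀ hz0 hz1)
      _ = ((n:ℝ)+1) := by simp
  calc b n * (∑ j ∈ Finset.range (n+1), z^j) ≤ b n * ((n:ℝ)+1) :=
        mul_le_mul_of_nonneg_left h1 (hbnn n)
    _ = ((n:ℝ)+1) * b n := mul_comm _ _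

lemma Sv_summable (hbnn : ∀ n, 0 ≤ b n) (hbsum : HasSum b 1)
    (hμβ : HasSum (fun n : ℕ => (n : ℝ) * b n) μβ) {z : ℝ} (hz0 : 0 ≤ z) (hz1 : z ≤ 1) :
    Summable (fun n => b n * (∑ j ∈ Finset.range (n+1), z^j)) := by
  refine Summable.of_nonneg_of_le (fun n => mul_nonneg (hbnn n)
    (Finset.sum_nonneg (fun j _ => pow_nonneg hz0 j))) (Sv_bound_term hbnn hz0 hz1)
    (hasSum_np1 hbsum hμβ).summable

lemma Sv_le (hbnn : ∀ n, 0 ≤ b n) (hbsum : HasSum b 1)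
    (hμβ : HasSum (fun n : ℕ => (n : ℝ) * b n) μβ) {z : ℝ} (hz0 : 0 ≤ z) (hz1 : z ≤ 1) :
    Sv b z ≤ μβ + 1 := by
  rw [Sv, ← (hasSum_np1 hbsum hμβ).tsum_eq]
  exact Summable.tsum_le_tsum (Sv_bound_term hbnn hz0 hz1) (Sv_summable hbnn hbsum hμβ hz0 hz1)
    (hasSum_np1 hbsum hμβ).summable

lemma Sv_nonneg (hbnn : ∀ n, 0 ≤ b n) {z : ℝ} (hz0 : 0 ≤ z) : 0 ≤ Sv b z :=
  tsum_nonneg (fun n => mul_nonneg (hbnn n) (Finset.sum_nonneg (fun j _ => pow_nonneg hz0 j)))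

lemma one_sub_z_Sv (hbnn : ∀ n, 0 ≤ b n) (hbsum : HasSum b 1)
    (hμβ : HasSum (fun n : ℕ => (n : ℝ) * b n) μβ)
    (hφβ : ∀ z, φβ z = ∑' n : ℕ, b n * z ^ n) {z : ℝ} (hz0 : 0 ≤ z) (hz1 : z ≤ 1) :
    (1-z) * Sv b z = 1 - z * φβ z := by
  have hs1 : Summable (fun n => (b n * z^n) * z) := (summable_bz hbnn hbsum hz0 hz1).mul_right z
  have hkey : ∀ n : ℕ, b n - (b n * z^n) * z = (1-z) * (b n * (∑ j ∈ Finset.range (n+1), z^j)) := by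
    intro n
    have := geom_sum_mul z (n+1)
    have h2 : (1-z) * (∑ j ∈ Finset.range (n+1), z^j) = 1 - z^(n+1) := by nlinarith [this]
    calc b n - (b n * z^n) * z = b n * (1 - z^(n+1)) := by rw [pow_succ]; ring
      _ = b n * ((1-z) * (∑ j ∈ Finset.range (n+1), z^j)) := by rw [h2]
      _ = (1-z) * (b n * (∑ j ∈ Finset.range (n+1), z^j)) := by ring
  have hsub := Summable.tsum_sub hbsum.summable hs1
  rw [hbsum.tsum_eq] at hsub
  have hφ : (∑' n, (b n * z^n) * z) = φβ z * z := by
    rw [tsum_mul_right, hφβ]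
  rw [hφ] at hsub
  calc (1-z) * Sv b z = ∑' n, (1-z) * (b n * (∑ j ∈ Finset.range (n+1), z^j)) := by
        rw [Sv, tsum_mul_left]
    _ = ∑' n, (b n - (b n * z^n) * z) := tsum_congr (fun n => (hkey n).symm)
    _ = 1 - φβ z * z := hsub
    _ = 1 - z * φβ z := by ring

lemma Sv_tendsto (hbnn : ∀ n, 0 ≤ b n) (hbsum : HasSum b 1)
    (hμβ : HasSum (fun n : ℕ => (n : ℝ) * b n) μβ)
    {zk : ℕ → ℝ} (hz0 : ∀ k, 0 ≤ zk k) (hz1 : ∀ k, zk k ≤ 1)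
    (hzk : Tendsto zk atTop (nhds 1)) :
    Tendsto (fun k => Sv b (zk k)) atTop (nhds (μβ + 1)) := by
  rw [Metric.tendsto_atTop]
  intro ε hε
  have hps := (hasSum_np1 hbsum hμβ).tendsto_sum_nat
  rw [Metric.tendsto_atTop] at hps
  obtain ⟨N, hN⟩ := hps (ε/2) (by linarith)
  have hNd := hN N (le_refl N)
  rw [Real.dist_eq, abs_sub_lt_iff] at hNd
  -- finite approximation tends to the partial sum
  have hfin : Tendsto (fun k => ∑ n ∈ Finset.range N, b n *
      (∑ j ∈ Finset.range (n+1), (zk k)^j)) atTop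
      (nhds (∑ n ∈ Finset.range N, ((n:ℝ)+1) * b n)) := by
    refine tendsto_finset_sum _ (fun n _ => ?_)
    have hinner : Tendsto (fun k => ∑ j ∈ Finset.range (n+1), (zk k)^j) atTop
        (nhds ((n:ℝ)+1)) := by
      have : Tendsto (fun k => ∑ j ∈ Finset.range (n+1), (zk k)^j) atTop
          (nhds (∑ j ∈ Finset.range (n+1), (1:ℝ))) :=
        tendsto_finset_sum _ (fun j _ => by simpa using hzk.pow j)
      simpa using this
    have := hinner.const_mul (b n)
    simpa [mul_comm] using this
  rw [Metric.tendsto_atTop] at hfin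
  obtain ⟨K, hK⟩ := hfin (ε/2) (by linarith)
  refine ⟨K, fun k hk => ?_⟩
  have hKd := hK k hk
  rw [Real.dist_eq, abs_sub_lt_iff] at hKd
  have hSv_le : Sv b (zk k) ≤ μβ + 1 := Sv_le hbnn hbsum hμβ (hz0 k) (hz1 k)
  have hSv_ge : (∑ n ∈ Finset.range N, b n * (∑ j ∈ Finset.range (n+1), (zk k)^j)) ≤
      Sv b (zk k) := by
    rw [Sv]
    exact Summable.sum_le_tsum _ (fun n _ => mul_nonneg (hbnn n)
      (Finset.sum_nonneg (fun j _ => pow_nonneg (hz0 k) j)))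
      (Sv_summable hbnn hbsum hμβ (hz0 k) (hz1 k))
  rw [Real.dist_eq, abs_sub_lt_iff]
  constructor
  · linarith
  · linarith

end Mean

end Stmt15

namespace Stmt15

section Mean2

open Filter

variable {α : ℝ} {b : ℕ → ℝ} {φβ : ℝ → ℝ} {μβ : ℝ} {zfun : ℝ → ℝ}

lemma φβ_tendsto (hbnn : ∀ n, 0 ≤ b n) (hbsum : HasSum b 1)
    (hμβ : HasSum (fun n : ℕ => (n : ℝ) * b n) μβ)
    (hφβ : ∀ z, φβ z = ∑' n : ℕ, b n * z ^ n)
    {zk : ℕ → ℝ} (hz0 : ∀ k, 0 ≤ zk k) (hz1 : ∀ k, zk k ≤ 1)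
    (hzk : Tendsto zk atTop (nhds 1)) :
    Tendsto (fun k => φβ (zk k)) atTop (nhds 1) := by
  have hlow : ∀ k, 1 - μβ * (1 - zk k) ≤ φβ (zk k) := fun k =>
    φβ_lower hbnn hbsum hμβ hφβ (hz0 k) (hz1 k)
  have hup : ∀ k, φβ (zk k) ≤ 1 := fun k => φβ_le_one hφβ hbnn hbsum (hz0 k) (hz1 k)
  have hlowt : Tendsto (fun k => 1 - μβ * (1 - zk k)) atTop (nhds 1) := by
    have h1 : Tendsto (fun k => (1:ℝ) - zk k) atTop (nhds 0) := by
      have := (tendsto_const_nhds (x := (1:ℝ))).sub hzk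
      simpa using this
    have h2 := h1.const_mul μβ
    rw [mul_zero] at h2
    have := (tendsto_const_nhds (x := (1:ℝ))).sub h2
    simpa using this
  exact tendsto_of_tendsto_of_tendsto_of_le_of_le hlowt tendsto_const_nhds hlow hup

lemma cr_pos (hα0 : 0 < α) (hlt : μβ < (1 - α) / α) : 0 < 1 - α - α*μβ := by
  rw [lt_div_iff₀ hα0] at hlt
  nlinarith

lemma ratio_tendsto (hα0 : 0 < α) (hα1 : α < 1) (hbnn : ∀ n, 0 ≤ b n) (hbsum : HasSum b 1)
    (hb00 : 0 < b 0)
    (hμβ : HasSum (fun n : ℕ => (n : ℝ) * b n) μβ) (hlt : μβ < (1 - α) / α)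
    (hφβ : ∀ z, φβ z = ∑' n : ℕ, b n * z ^ n)
    (hzfun : ∀ u ∈ Icc (0:ℝ) 1, zfun u ∈ Icc (1-α) 1 ∧
      zfun u - (1 - α) = u * (α * zfun u * φβ (zfun u))) :
    Tendsto (fun k => (1 - zfun (uk k))/(1 - uk k)) atTop
      (nhds (α / (1 - α - α*μβ))) := by
  have hzk := zk_to_one hα0 hα1 hbnn hbsum hμβ hlt.le hφβ hzfun
  have hcr : 0 < 1 - α - α*μβ := cr_pos hα0 hlt
  have hzfacts : ∀ k, 1 - α ≤ zfun (uk k) ∧ zfun (uk k) ≤ 1 ∧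
      zfun (uk k) - (1 - α) = uk k * (α * zfun (uk k) * φβ (zfun (uk k))) := by
    intro k
    obtain ⟨⟨h1, h2⟩, h3⟩ := hzfun (uk k) ⟨(uk_mem k).1.le, (uk_mem k).2.le⟩
    exact ⟨h1, h2, h3⟩
  have hz0 : ∀ k, 0 ≤ zfun (uk k) := fun k => by linarith [(hzfacts k).1]
  have hz1 : ∀ k, zfun (uk k) ≤ 1 := fun k => (hzfacts k).2.1
  have hφt := φβ_tendsto hbnn hbsum hμβ hφβ hz0 hz1 hzk
  have hSt := Sv_tendsto hbnn hbsum hμβ hz0 hz1 hzk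
  -- identity : (1-z)/(1-u) = (α z φβ z) / (1 - α * Sv b z)
  have hiden : ∀ k, (1 - zfun (uk k))/(1 - uk k) =
      (α * zfun (uk k) * φβ (zfun (uk k))) / (1 - α * Sv b (zfun (uk k))) := by
    intro k
    obtain ⟨hzl, hzu, heq⟩ := hzfacts k
    obtain ⟨hu0, hu1⟩ := uk_mem k
    set z := zfun (uk k)
    set u := uk k
    have hsv := one_sub_z_Sv hbnn hbsum hμβ hφβ (hz0 k) hzu
    have hR_ge : 1 - α * (μβ + 1) ≤ 1 - α * Sv b z := by
      have := Sv_le hbnn hbsum hμβ (hz0 k) hzu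
      nlinarith
    have hRpos : 0 < 1 - α * Sv b z := by nlinarith
    have hiden0 : (1 - z) * (1 - α * Sv b z) = (1 - u) * (α * z * φβ z) := by
      have e1 : (1-z) * (1 - α * Sv b z) = (1-z) - α * ((1-z) * Sv b z) := by ring
      rw [e1, hsv]
      have e2 : u * (α * z * φβ z) = z - (1-α) := heq.symm
      nlinarith [e2]
    rw [div_eq_div_iff (by linarith : (1:ℝ) - u ≠ 0) (ne_of_gt hRpos)]
    nlinarith [hiden0]
  have hnum : Tendsto (fun k => α * zfun (uk k) * φβ (zfun (uk k))) atTop (nhds α) := by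
    have := ((tendsto_const_nhds (x := α)).mul hzk).mul hφt
    simpa using this
  have hden : Tendsto (fun k => 1 - α * Sv b (zfun (uk k))) atTop
      (nhds (1 - α * (μβ + 1))) := by
    have := (tendsto_const_nhds (x := (1:ℝ))).sub (hSt.const_mul α)
    simpa using this
  have hne : 1 - α * (μβ + 1) ≠ 0 := by
    have : 1 - α * (μβ + 1) = 1 - α - α*μβ := by ring
    rw [this]; exact ne_of_gt hcr
  have := hnum.div hden hne
  have hval : α / (1 - α * (μβ + 1)) = α / (1 - α - α*μβ) := by ring_nf
  rw [hval] at this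
  exact Tendsto.congr (fun k => (hiden k).symm) this

lemma mean_ratio_tendsto (hα0 : 0 < α) (hα1 : α < 1) (hbnn : ∀ n, 0 ≤ b n) (hbsum : HasSum b 1)
    (hb00 : 0 < b 0)
    (hμβ : HasSum (fun n : ℕ => (n : ℝ) * b n) μβ) (hlt : μβ < (1 - α) / α)
    (hφβ : ∀ z, φβ z = ∑' n : ℕ, b n * z ^ n)
    (hzfun : ∀ u ∈ Icc (0:ℝ) 1, zfun u ∈ Icc (1-α) 1 ∧
      zfun u - (1 - α) = u * (α * zfun u * φβ (zfun u)))
    (hq1 : ∀ x, (∑' n, q α b x n) ≤ 1) {x₀ : ℕ} (hx₀ : x₀ ≠ 0) :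
    Tendsto (fun k => (1 - F α b (uk k) x₀)/(1 - uk k)) atTop
      (nhds ((b 0 * x₀ + (1-α)/α) / (b 0 * ((1-α)/α - μβ)))) := by
  have hzk := zk_to_one hα0 hα1 hbnn hbsum hμβ hlt.le hφβ hzfun
  have hcr : 0 < 1 - α - α*μβ := cr_pos hα0 hlt
  have hzfacts : ∀ k, 1 - α ≤ zfun (uk k) ∧ zfun (uk k) ≤ 1 := by
    intro k
    obtain ⟨⟨h1, h2⟩, _⟩ := hzfun (uk k) ⟨(uk_mem k).1.le, (uk_mem k).2.le⟩
    exact ⟨h1, h2⟩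
  have hz0 : ∀ k, 0 ≤ zfun (uk k) := fun k => by linarith [(hzfacts k).1]
  -- pointwise identity
  have hpt : ∀ k, (1 - F α b (uk k) x₀)/(1 - uk k) =
      ((1 - zfun (uk k))/(1 - uk k)) *
        ((∑ i ∈ Finset.range x₀, (zfun (uk k))^i) +
          (zfun (uk k))^x₀ * ((1-α) /
            (α * b 0 * uk k * zfun (uk k) + (1-α)*(1 - zfun (uk k))))) := by
    intro k
    obtain ⟨hu0, hu1⟩ := uk_mem k
    obtain ⟨⟨hzl, hzu⟩, heq⟩ := hzfun (uk k) ⟨hu0.le, hu1.le⟩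
    set z := zfun (uk k) with hzdef
    set u := uk k with hudef
    have hF : F α b u x₀ = z ^ x₀ * Dv α b u z := by
      rw [F_eq_Hv hα0 hα1 hbnn hbsum hb00 hφβ hzfun hq1 hu0 hu1 x₀, Hv, if_neg hx₀]
    have hden : 0 < α * b 0 * u * z + (1-α) * (1-z) := den_pos hα0 hα1 hb00 hu0 hzl hzu
    have hgeo : (1-z) * (∑ i ∈ Finset.range x₀, z^i) = 1 - z^x₀ := by
      have := geom_sum_mul z x₀
      nlinarith [this]
    have hD : 1 - Dv α b u z = (1-α)*(1-z) / (α * b 0 * u * z + (1-α)*(1-z)) := by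
      rw [Dv, eq_div_iff (ne_of_gt hden)]
      field_simp; ring
    have hkey : 1 - z^x₀ * Dv α b u z = (1-z) *
        ((∑ i ∈ Finset.range x₀, z^i) +
          z^x₀ * ((1-α) / (α * b 0 * u * z + (1-α)*(1-z)))) := by
      have e1 : 1 - z^x₀ * Dv α b u z = (1 - z^x₀) + z^x₀ * (1 - Dv α b u z) := by ring
      rw [e1, hD, ← hgeo]
      field_simp
    rw [hF, hkey]
    rw [mul_div_assoc']
    rw [mul_comm (1-z) _, mul_div_assoc, mul_comm]
  have hrat := ratio_tendsto hα0 hα1 hbnn hbsum hb00 hμβ hlt hφβ hzfun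
  have hsum_t : Tendsto (fun k => ∑ i ∈ Finset.range x₀, (zfun (uk k))^i) atTop
      (nhds (x₀:ℝ)) := by
    have h1 : Tendsto (fun k => ∑ i ∈ Finset.range x₀, (zfun (uk k))^i) atTop
        (nhds (∑ i ∈ Finset.range x₀, (1:ℝ))) :=
      tendsto_finset_sum _ (fun i _ => by simpa using hzk.pow i)
    simpa using h1
  have hden_t : Tendsto (fun k => α * b 0 * uk k * zfun (uk k) +
      (1-α)*(1 - zfun (uk k))) atTop (nhds (α * b 0)) := by
    have hnum : Tendsto (fun k => α * b 0 * uk k * zfun (uk k)) atTop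
        (nhds (α * b 0)) := by
      have := ((tendsto_const_nhds (x := α * b 0)).mul uk_tendsto).mul hzk
      simpa using this
    have h2 : Tendsto (fun k => (1-α) * (1 - zfun (uk k))) atTop (nhds 0) := by
      have := ((tendsto_const_nhds (x := (1:ℝ))).sub hzk).const_mul (1-α)
      simpa using this
    have := hnum.add h2
    simpa using this
  have hb_t : Tendsto (fun k => (zfun (uk k))^x₀ * ((1-α) /
      (α * b 0 * uk k * zfun (uk k) + (1-α)*(1 - zfun (uk k))))) atTop
      (nhds ((1-α)/(α * b 0))) := by
    have hdiv := (tendsto_const_nhds (x := (1-α))).div hden_t (by positivity)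
    have := (hzk.pow x₀).mul hdiv
    simpa using this
  have htot := hrat.mul (hsum_t.add hb_t)
  have hval : (α / (1 - α - α*μβ)) * ((x₀:ℝ) + (1-α)/(α * b 0)) =
      (b 0 * x₀ + (1-α)/α) / (b 0 * ((1-α)/α - μβ)) := by
    have h1 : (1-α)/α - μβ = (1 - α - α*μβ)/α := by field_simp
    rw [h1]
    field_simp
  rw [hval] at htot
  exact Tendsto.congr (fun k => (hpt k).symm) htot

end Mean2

end Stmt15

namespace Stmt15

section Mean3

open Filter MeasureTheory

variable {α : ℝ} {b : ℕ → ℝ} {φβ : ℝ → ℝ} {μβ : ℝ} {zfun : ℝ → ℝ}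

lemma tsum_n_q (hα0 : 0 < α) (hα1 : α < 1) (hbnn : ∀ n, 0 ≤ b n) (hbsum : HasSum b 1)
    (hb00 : 0 < b 0)
    (hμβ : HasSum (fun n : ℕ => (n : ℝ) * b n) μβ) (hlt : μβ < (1 - α) / α)
    (hφβ : ∀ z, φβ z = ∑' n : ℕ, b n * z ^ n)
    (hzfun : ∀ u ∈ Icc (0:ℝ) 1, zfun u ∈ Icc (1-α) 1 ∧
      zfun u - (1 - α) = u * (α * zfun u * φβ (zfun u)))
    (hq1 : ∀ x, (∑' n, q α b x n) ≤ 1) {x₀ : ℕ} (hx₀ : x₀ ≠ 0)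
    (hqsum1 : (∑' n, q α b x₀ n) = 1) :
    (∑' n : ℕ, (n : ℝ≥0∞) * q α b x₀ n) =
      ENNReal.ofReal ((b 0 * x₀ + (1-α)/α) / (b 0 * ((1-α)/α - μβ))) := by
  have hc1 : (∑' n, cc α b x₀ n) = 1 := by
    have h := ENNReal.tsum_toReal_eq (f := fun n => q α b x₀ n)
      (fun n => q_ne_top hq1 x₀ n)
    rw [hqsum1] at h
    simpa [cc] using h.symm
  set g : ℕ → ℕ → ℝ≥0∞ := fun k n =>
    ENNReal.ofReal ((∑ j ∈ Finset.range n, (uk k)^j) * cc α b x₀ n) with hg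
  have hgmono : Monotone g := by
    intro j k hjk
    intro n
    apply ENNReal.ofReal_le_ofReal
    refine mul_le_mul_of_nonneg_right ?_ (cc_nonneg x₀ n)
    exact Finset.sum_le_sum (fun i _ =>
      pow_le_pow_left₀ (uk_mem j).1.le (uk_mono hjk) i)
  have hsup : ∀ n, (⨆ k, g k n) = (n : ℝ≥0∞) * q α b x₀ n := by
    intro n
    refine iSup_eq_of_tendsto (fun j k hjk => hgmono hjk n) ?_
    have hreal : Tendsto (fun k => (∑ j ∈ Finset.range n, (uk k)^j) * cc α b x₀ n)
        atTop (nhds ((n:ℝ) * cc α b x₀ n)) := by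
      have h1 : Tendsto (fun k => ∑ j ∈ Finset.range n, (uk k)^j) atTop (nhds (n:ℝ)) := by
        have h2 : Tendsto (fun k => ∑ j ∈ Finset.range n, (uk k)^j) atTop
            (nhds (∑ j ∈ Finset.range n, (1:ℝ))) :=
          tendsto_finset_sum _ (fun j _ => by simpa using uk_tendsto.pow j)
        simpa using h2
      exact h1.mul_const _
    have hcomp := (ENNReal.continuous_ofReal.tendsto _).comp hreal
    have hv : ENNReal.ofReal ((n:ℝ) * cc α b x₀ n) = (n:ℝ≥0∞) * q α b x₀ n := by
      rw [ENNReal.ofReal_mul (Nat.cast_nonneg n), ENNReal.ofReal_natCast,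
        ← q_eq_ofReal hq1]
    rw [← hv]
    exact hcomp
  have hmeas : ∀ k, Measurable (g k) := fun k => measurable_of_countable _
  have hstep : ∀ k, (∑' n, g k n) =
      ENNReal.ofReal ((1 - F α b (uk k) x₀)/(1 - uk k)) := by
    intro k
    rw [← one_sub_F_div hq1 hc1 (uk_mem k).1 (uk_mem k).2]
    rw [ENNReal.ofReal_tsum_of_nonneg (fun n => mul_nonneg
      (Finset.sum_nonneg (fun j _ => pow_nonneg (uk_mem k).1.le j)) (cc_nonneg x₀ n))
      (summable_geom_sum_cc hq1 (uk_mem k).1 (uk_mem k).2 x₀)]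
  calc (∑' n : ℕ, (n : ℝ≥0∞) * q α b x₀ n)
      = ∑' n, ⨆ k, g k n := tsum_congr (fun n => (hsup n).symm)
    _ = ∫⁻ n, ⨆ k, g k n ∂(Measure.count) := (lintegral_count _).symm
    _ = ⨆ k, ∫⁻ n, g k n ∂(Measure.count) := lintegral_iSup hmeas hgmono
    _ = ⨆ k, ∑' n, g k n := by simp_rw [lintegral_count]
    _ = ENNReal.ofReal ((b 0 * x₀ + (1-α)/α) / (b 0 * ((1-α)/α - μβ))) := by
        have hmono2 : Monotone (fun k => ∑' n, g k n) := by
          intro j k hjk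
          exact Summable.tsum_le_tsum (fun n => hgmono hjk n) ENNReal.summable ENNReal.summable
        refine iSup_eq_of_tendsto hmono2 ?_
        have hrt := mean_ratio_tendsto hα0 hα1 hbnn hbsum hb00 hμβ hlt hφβ hzfun hq1 hx₀
        have := (ENNReal.continuous_ofReal.tendsto _).comp hrt
        refine Tendsto.congr (fun k => (hstep k).symm) (by simpa [Function.comp_def] using this)

end Mean3

end Stmt15

namespace Stmt15

lemma natInf_eq_iff {S : Set ℕ} {n : ℕ} (hn : n ≠ 0) :
    sInf S = n ↔ n ∈ S ∧ ∀ k < n, k ∉ S := by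
  constructor
  · intro h
    have hne : S.Nonempty := by
      by_contra hS
      rw [Set.not_nonempty_iff_eq_empty] at hS
      rw [hS, Nat.sInf_empty] at h
      exact hn h.symm
    constructor
    · rw [← h]; exact Nat.sInf_mem hne
    · intro k hk
      exact Nat.notMem_of_lt_sInf (h ▸ hk)
  · rintro ⟨h1, h2⟩
    refine le_antisymm (Nat.sInf_le h1) ?_
    by_contra hlt
    push_neg at hlt
    exact h2 _ hlt (Nat.sInf_mem ⟨n, h1⟩)

end Stmt15

open Stmt15

/-- Recurrent regime: the first hitting time of 0 from `x₀ ≥ 1` satisfies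
`E(u^{τ_{x₀,0}}) = z(u)^{x₀} E(u^{τ_{0,0}})`, with
`E(u^{τ_{0,0}}) = αb₀uz(u)/(αb₀uz(u)+ᾱ(1-z(u)))` — i.e. `τ_{x₀,0}` is distributed
as the independent sum of `τ_{0,0}` and `x₀` i.i.d. copies with p.g.f. `z(u)` —
and, in the positive recurrent case `μ_β < μ_δ`,
`E(τ_{x₀,0}) = (b₀x₀ + μ_δ)/(b₀(μ_δ - μ_β))`. -/
theorem stmt15 {Ω : Type*} [MeasurableSpace Ω] (μ : Measure Ω) [IsProbabilityMeasure μ]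
    (α : ℝ) (hα0 : 0 < α) (hα1 : α < 1)
    (b : ℕ → ℝ) (hbnn : ∀ n, 0 ≤ b n) (hbsum : HasSum b 1)
    (hb00 : 0 < b 0) (hb01 : b 0 < 1)
    (μβ : ℝ) (hμβ : HasSum (fun n : ℕ => (n : ℝ) * b n) μβ)
    (hrec : μβ ≤ (1 - α) / α)
    (x₀ : ℕ) (hx₀ : 1 ≤ x₀)
    (δ β : ℕ → Ω → ℕ) (X : ℕ → Ω → ℕ)
    (hmδ : ∀ n, Measurable (δ n)) (hmβ : ∀ n, Measurable (β n)) (hmX : ∀ n, Measurable (X n))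
    (hX0 : ∀ ω, X 0 ω = x₀)
    (hXrec : ∀ n ω, X (n + 1) ω = (X n ω - δ (n + 1) ω) + β (n + 1) ω)
    (hδd : ∀ n x, μ {ω | δ n ω = x} = ENNReal.ofReal (α * (1 - α) ^ x))
    (hβd : ∀ n x, μ {ω | β n ω = x} = ENNReal.ofReal (b x))
    (hindep : iIndepFun (Sum.elim δ β) μ)
    (φβ zfun : ℝ → ℝ)
    (hφβ : ∀ z, φβ z = ∑' n : ℕ, b n * z ^ n)
    (hzfun : ∀ u ∈ Icc (0 : ℝ) 1, zfun u ∈ Icc (1 - α) 1 ∧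
      zfun u - (1 - α) = u * (α * zfun u * φβ (zfun u))) :
    (∀ u ∈ Icc (0 : ℝ) 1,
      ∫ ω, u ^ (sInf {n : ℕ | X n ω = 0}) ∂μ =
        zfun u ^ x₀ *
          (α * b 0 * u * zfun u / (α * b 0 * u * zfun u + (1 - α) * (1 - zfun u)))) ∧
    (μβ < (1 - α) / α →
      ∫ ω, ((sInf {n : ℕ | X n ω = 0} : ℕ) : ℝ) ∂μ =
        (b 0 * x₀ + (1 - α) / α) / (b 0 * ((1 - α) / α - μβ))) := by
  classical
  set τ : Ω → ℕ := fun ω => sInf {n : ℕ | X n ω = 0} with hτdef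
  have hx₀0 : x₀ ≠ 0 := by omega
  -- X in terms of the pure walk
  have hXpw : ∀ n ω, X n ω = pw x₀ n (fun j => (δ (j+1) ω, β (j+1) ω)) := by
    intro n
    induction n with
    | zero => intro ω; rw [hX0]; rfl
    | succ n ih => intro ω; rw [hXrec, ih]; rfl
  -- description of the hit events
  have hEdesc : ∀ x n, Phi δ β n ⁻¹' hitSet x n =
      {ω | pw x n (fun j => (δ (j+1) ω, β (j+1) ω)) = 0 ∧
           ∀ k < n, pw x k (fun j => (δ (j+1) ω, β (j+1) ω)) ≠ 0} := by
    intro x n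
    ext ω
    have hagree : ∀ k, k ≤ n → pw x k (ext n (Phi δ β n ω)) =
        pw x k (fun j => (δ (j+1) ω, β (j+1) ω)) := by
      intro k hk
      apply pw_congr
      intro j hj
      have hjn : j < n := lt_of_lt_of_le hj hk
      simp only [Stmt15.ext, hjn, dif_pos]
      rfl
    simp only [mem_preimage, hitSet, mem_setOf_eq]
    constructor
    · rintro ⟨h1, h2⟩
      exact ⟨by rw [← hagree n le_rfl]; exact h1,
        fun k hk => by rw [← hagree k hk.le]; exact h2 k hk⟩
    · rintro ⟨h1, h2⟩
      exact ⟨by rw [hagree n le_rfl]; exact h1,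
        fun k hk => by rw [hagree k hk.le]; exact h2 k hk⟩
  have hEmeas : ∀ x n, MeasurableSet (Phi δ β n ⁻¹' hitSet x n) := fun x n =>
    measurable_Phi δ β hmδ hmβ n ((Set.to_countable _).measurableSet)
  have hmeasq := fun (x n : ℕ) => meas_hitE μ α b δ β hmδ hmβ hδd hβd hindep x n
  -- disjointness of hit events over n
  have hdisE : ∀ x, Pairwise (Function.onFun Disjoint
      (fun n => Phi δ β n ⁻¹' hitSet x n)) := by
    intro x
    have key : ∀ m n : ℕ, m < n → ∀ ω, ω ∈ Phi δ β m ⁻¹' hitSet x m →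
        ω ∉ Phi δ β n ⁻¹' hitSet x n := by
      intro m n hmn ω h1 h2
      rw [hEdesc] at h1 h2
      exact h2.2 m hmn h1.1
    intro m n hmn
    rcases lt_or_gt_of_ne hmn with h | h
    · rw [Function.onFun, Set.disjoint_left]
      exact fun ω hω hω' => key m n h ω hω hω'
    · rw [Function.onFun, Set.disjoint_right]
      exact fun ω hω hω' => key n m h ω hω hω'
  -- total mass bound
  have hq1 : ∀ x, (∑' n, q α b x n) ≤ 1 := by
    intro x
    calc (∑' n, q α b x n) = ∑' n, μ (Phi δ β n ⁻¹' hitSet x n) :=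
          tsum_congr (fun n => (hmeasq x n).symm)
      _ = μ (⋃ n, Phi δ β n ⁻¹' hitSet x n) :=
          (measure_iUnion (hdisE x) (fun n => hEmeas x n)).symm
      _ ≤ 1 := prob_le_one
  have hq0 : q α b x₀ 0 = 0 := by simp [q, hx₀0]
  -- τ fibers for positive times
  have hτfiber : ∀ n : ℕ, n ≠ 0 → {ω | τ ω = n} = Phi δ β n ⁻¹' hitSet x₀ n := by
    intro n hn
    ext ω
    rw [hEdesc]
    simp only [mem_setOf_eq, hτdef]
    rw [natInf_eq_iff hn]
    simp only [Set.mem_setOf_eq]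
    constructor
    · rintro ⟨h1, h2⟩
      refine ⟨by rw [← hXpw]; exact h1, fun k hk => by rw [← hXpw]; exact h2 k hk⟩
    · rintro ⟨h1, h2⟩
      exact ⟨by rw [hXpw]; exact h1, fun k hk => by rw [hXpw]; exact h2 k hk⟩
  have hfib : ∀ n : ℕ, n ≠ 0 → μ {ω | τ ω = n} = q α b x₀ n := by
    intro n hn
    rw [hτfiber n hn, hmeasq x₀ n]
  -- recurrence: total mass one
  have hqsum1 := tsum_q_one hα0 hα1 hbnn hbsum hb00 hμβ hrec hφβ hzfun hq1 hx₀0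
  -- fibers partition
  have hfib0meas : MeasurableSet {ω | τ ω = 0} := by
    have : {ω | τ ω = 0} = (⋃ n : ℕ, {ω | τ ω = n + 1})ᶜ := by
      ext ω
      simp only [mem_setOf_eq, Set.mem_compl_iff, Set.mem_iUnion]
      constructor
      · intro h hc
        obtain ⟨n, hn⟩ := hc
        omega
      · intro h
        by_contra h0
        exact h ⟨τ ω - 1, by omega⟩
    rw [this]
    refine MeasurableSet.compl (MeasurableSet.iUnion (fun n => ?_))
    rw [hτfiber (n+1) (Nat.succ_ne_zero n)]
    exact hEmeas x₀ (n+1)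
  have hfibmeas : ∀ n : ℕ, MeasurableSet {ω | τ ω = n} := by
    intro n
    cases n with
    | zero => exact hfib0meas
    | succ n => rw [hτfiber (n+1) (Nat.succ_ne_zero n)]; exact hEmeas x₀ (n+1)
  have hmτ : Measurable τ := measurable_to_countable' (fun n => by
    have : τ ⁻¹' {n} = {ω | τ ω = n} := rfl
    rw [this]
    exact hfibmeas n)
  have hτdisj : Pairwise (Function.onFun Disjoint (fun n : ℕ => {ω | τ ω = n})) := by
    intro m n hmn
    rw [Function.onFun, Set.disjoint_left]
    intro ω hω hω'
    simp only [mem_setOf_eq] at hω hω'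
    exact hmn (hω ▸ hω')
  have hpart : (∑' n : ℕ, μ {ω | τ ω = n}) = 1 := by
    rw [← measure_iUnion hτdisj hfibmeas]
    have : (⋃ n : ℕ, {ω | τ ω = n}) = Set.univ := by
      ext ω
      simp only [Set.mem_iUnion, mem_setOf_eq, Set.mem_univ, iff_true]
      exact ⟨τ ω, rfl⟩
    rw [this, measure_univ]
  -- μ(τ = 0) = 0
  have hτ0 : μ {ω | τ ω = 0} = 0 := by
    have h1 : (∑' n : ℕ, μ {ω | τ ω = n}) =
        μ {ω | τ ω = 0} + ∑' n : ℕ, μ {ω | τ ω = n + 1} :=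
      tsum_eq_zero_add' ENNReal.summable
    have h2 : (∑' n : ℕ, μ {ω | τ ω = n + 1}) = ∑' n : ℕ, q α b x₀ (n+1) :=
      tsum_congr (fun n => hfib (n+1) (Nat.succ_ne_zero n))
    have h3 : (∑' n : ℕ, q α b x₀ (n+1)) = 1 := by
      have h4 : (∑' n, q α b x₀ n) = q α b x₀ 0 + ∑' n, q α b x₀ (n+1) :=
        tsum_eq_zero_add' ENNReal.summable
      rw [hqsum1, hq0, zero_add] at h4
      exact h4.symm
    rw [hpart, h2, h3] at h1
    have h5 : μ {ω | τ ω = 0} + 1 = 0 + 1 := by rw [zero_add]; exact h1.symm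
    exact (ENNReal.add_right_inj ENNReal.one_ne_top).mp (by
      rw [add_comm (μ {ω | τ ω = 0}) 1, add_comm (0:ℝ≥0∞) 1] at h5
      exact h5)
  constructor
  · -- part 1
    intro u hu
    obtain ⟨hu0, hu1⟩ := hu
    rcases eq_or_lt_of_le hu1 with hu1e | hu1s
    · -- u = 1
      subst hu1e
      have hz1 : zfun 1 = 1 := zfun_one hα0 hα1 hbnn hbsum hb01 hμβ hrec hφβ hzfun
      rw [hz1]
      simp only [one_pow, mul_one, one_mul, sub_self, mul_zero, add_zero]
      rw [div_self (by positivity : α * b 0 ≠ 0)]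
      simp [measure_univ]
    rcases eq_or_lt_of_le hu0 with hu0e | hu0s
    · -- u = 0
      rw [← hu0e]
      have hae : ∀ᵐ ω ∂μ, τ ω ≠ 0 := by
        rw [MeasureTheory.ae_iff]
        convert hτ0 using 2
        ext ω
        simp
      have hae2 : (fun ω => (0:ℝ) ^ (sInf {n : ℕ | X n ω = 0})) =ᵐ[μ] (fun _ => (0:ℝ)) := by
        filter_upwards [hae] with ω hω
        exact zero_pow hω
      rw [MeasureTheory.integral_congr_ae hae2, MeasureTheory.integral_const]
      simp
    -- 0 < u < 1
    have hInt : MeasureTheory.Integrable (fun ω => u ^ τ ω) μ := by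
      refine MeasureTheory.Integrable.mono' (MeasureTheory.integrable_const 1)
        ((measurable_of_countable (fun n : ℕ => u ^ n)).comp hmτ).aestronglyMeasurable
        (Filter.Eventually.of_forall (fun ω => ?_))
      rw [Real.norm_eq_abs, abs_of_nonneg (pow_nonneg hu0s.le _)]
      exact pow_le_one₀ hu0s.le hu1s.le
    have hmap : IsProbabilityMeasure (μ.map τ) :=
      MeasureTheory.Measure.isProbabilityMeasure_map hmτ.aemeasurable
    have hIntMap : MeasureTheory.Integrable (fun n : ℕ => u ^ n) (μ.map τ) := by
      refine MeasureTheory.Integrable.mono' (MeasureTheory.integrable_const 1)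
        (measurable_of_countable (fun n : ℕ => u ^ n)).aestronglyMeasurable
        (Filter.Eventually.of_forall (fun n => ?_))
      rw [Real.norm_eq_abs, abs_of_nonneg (pow_nonneg hu0s.le _)]
      exact pow_le_one₀ hu0s.le hu1s.le
    have hint1 : ∫ ω, u ^ (sInf {n : ℕ | X n ω = 0}) ∂μ = ∫ n, u ^ n ∂(μ.map τ) := by
      rw [MeasureTheory.integral_map hmτ.aemeasurable
        (measurable_of_countable (fun n : ℕ => u ^ n)).aestronglyMeasurable]
    rw [hint1, MeasureTheory.integral_countable' hIntMap]
    have hsing : ∀ n : ℕ, (μ.map τ) {n} = μ {ω | τ ω = n} := by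
      intro n
      rw [MeasureTheory.Measure.map_apply hmτ (measurableSet_singleton n)]
      rfl
    have hterm : ∀ n : ℕ, (μ.map τ).real {n} • u ^ n = u ^ n * cc α b x₀ n := by
      intro n
      rw [measureReal_def, hsing n, smul_eq_mul, mul_comm]
      cases n with
      | zero => rw [hτ0]; simp [cc, hq0]
      | succ n => rw [hfib (n+1) (Nat.succ_ne_zero n)]; rfl
    rw [tsum_congr hterm, ← F_tsum hu0s.le hq1 x₀,
      F_eq_Hv hα0 hα1 hbnn hbsum hb00 hφβ hzfun hq1 hu0s hu1s x₀, Hv, if_neg hx₀0, Dv]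
  · -- part 2
    intro hlt
    have hL := tsum_n_q hα0 hα1 hbnn hbsum hb00 hμβ hlt hφβ hzfun hq1 hx₀0 hqsum1
    have hmeasR : Measurable (fun ω => ((τ ω : ℕ) : ℝ)) :=
      (measurable_of_countable (fun n : ℕ => (n : ℝ))).comp hmτ
    have hnn : 0 ≤ᵐ[μ] (fun ω => ((τ ω : ℕ) : ℝ)) :=
      Filter.Eventually.of_forall (fun ω => Nat.cast_nonneg _)
    rw [MeasureTheory.integral_eq_lintegral_of_nonneg_ae hnn hmeasR.aestronglyMeasurable]
    have hlin : (∫⁻ ω, ENNReal.ofReal ((τ ω : ℕ) : ℝ) ∂μ) =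
        ∑' n : ℕ, (n : ℝ≥0∞) * q α b x₀ n := by
      have e1 : (∫⁻ ω, ENNReal.ofReal ((τ ω : ℕ) : ℝ) ∂μ) =
          ∫⁻ ω, ((τ ω : ℕ) : ℝ≥0∞) ∂μ := by
        refine lintegral_congr (fun ω => ?_)
        exact ENNReal.ofReal_natCast _
      rw [e1]
      have e2 : (∫⁻ ω, ((τ ω : ℕ) : ℝ≥0∞) ∂μ) =
          ∫⁻ n, (n : ℝ≥0∞) ∂(μ.map τ) := by
        rw [MeasureTheory.lintegral_map (measurable_of_countable _) hmτ]
      rw [e2, lintegral_countable' (fun n : ℕ => (n : ℝ≥0∞))]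
      refine tsum_congr (fun n => ?_)
      rw [MeasureTheory.Measure.map_apply hmτ (measurableSet_singleton n)]
      cases n with
      | zero => simp
      | succ n =>
          have : τ ⁻¹' {n+1} = {ω | τ ω = n+1} := rfl
          rw [this, hfib (n+1) (Nat.succ_ne_zero n)]
    rw [hlin, hL, ENNReal.toReal_ofReal]
    have hden : 0 < b 0 * ((1 - α) / α - μβ) :=
      mul_pos hb00 (sub_pos.mpr hlt)
    have hnum : 0 ≤ b 0 * (x₀:ℝ) + (1 - α) / α := by
      have h1 : (0:ℝ) ≤ b 0 * (x₀:ℝ) := by positivity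
      have h2 : (0:ℝ) ≤ (1-α)/α := div_nonneg (by linarith) hα0.le
      linarith
    exact div_nonneg hnum hden.le
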